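/- arXiv:2209.07860 — 6 statements merged into one kernel-verified Lean document; each statement's English description precedes it below -/
import Mathlib

section
/- Let (G, L, c, r, e_r) be a rooted WRAP instance and let F⃗ ⊆ V × V be a non-shortenable directed WRAP solution. Then: (i) (V, F⃗) is an r-arborescence, i.e., every vertex v ∈ V \ {r} has exactly one incoming directed link, r has none, and (V, F⃗) contains no cycle when orientations are disregarded; (ii) F⃗ is G-planar, i.e., no two directed links of F⃗ are crossing (orientations disregarded); (iii) for every v ∈ V, the set of directed links of F⃗ with tail v contains at most one left-going and at most one right-going link. -/
/-!
Common definitions for the Weighted Ring Augmentation Problem (WRAP).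

A rooted WRAP instance `(G, L, c, r, e_r)` has a ring graph `G` whose
vertices we identify with `Fin n`, numbered `r = 0, 1, …, n-1` in the order
in which they appear along the path `(V, E \ {e_r})` starting at the root
`r = 0`.  Vertex `i` is to the left of `j` iff `i < j`.
-/

/-- An undirected link: an unordered pair of distinct vertices of the ring,
recorded via its left endpoint `lo` and its right endpoint `hi`. -/
structure Link (n : ℕ) where
  lo : Fin n
  hi : Fin n
  lo_lt_hi : lo < hi

instance {n : ℕ} : DecidableEq (Link n) := fun a b =>
  decidable_of_iff (a.lo = b.lo ∧ a.hi = b.hi) (by cases a; cases b; simp)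

/-- A directed link: an ordered pair of distinct vertices. -/
structure DLink (n : ℕ) where
  tail : Fin n
  head : Fin n
  ne : tail ≠ head

instance {n : ℕ} : DecidableEq (DLink n) := fun a b =>
  decidable_of_iff (a.tail = b.tail ∧ a.head = b.head) (by cases a; cases b; simp)

variable {n : ℕ}

/-- The underlying undirected link of a directed link. -/
def DLink.toLink (d : DLink n) : Link n :=
  ⟨min d.tail d.head, max d.tail d.head, min_lt_max.mpr d.ne⟩

/-- `ℓ` is incident to `v`. -/
def Link.Incident (ℓ : Link n) (v : Fin n) : Prop := ℓ.lo = v ∨ ℓ.hi = v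

/-- The 2-cuts `C_G` of the ring: the nonempty intervals of consecutive
vertices along the path `(V, E \ {e_r})` that do not contain the root `0`. -/
def IsCut [NeZero n] (C : Finset (Fin n)) : Prop :=
  ∃ a b : Fin n, 0 < a ∧ a ≤ b ∧ C = Finset.Icc a b

/-- `ℓ` has exactly one endpoint in `C`. -/
def crossesCut (ℓ : Link n) (C : Finset (Fin n)) : Prop :=
  (ℓ.lo ∈ C ∧ ℓ.hi ∉ C) ∨ (ℓ.lo ∉ C ∧ ℓ.hi ∈ C)

instance (ℓ : Link n) (C : Finset (Fin n)) : Decidable (crossesCut ℓ C) := by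
  unfold crossesCut; infer_instance

/-- `δ_K(C)`: the links of `K` with exactly one endpoint in `C`. -/
def cutLinks (K : Finset (Link n)) (C : Finset (Fin n)) : Finset (Link n) :=
  K.filter (fun ℓ => crossesCut ℓ C)

/-- An (undirected) WRAP solution: every 2-cut is covered by some link. -/
def IsSolution [NeZero n] (S : Finset (Link n)) : Prop :=
  ∀ C : Finset (Fin n), IsCut C → (cutLinks S C).Nonempty

/-- A directed link covers a 2-cut if it enters it. -/
def DCovers (d : DLink n) (C : Finset (Fin n)) : Prop := d.tail ∉ C ∧ d.head ∈ C

/-- A directed WRAP solution: every 2-cut is entered by some directed link. -/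
def IsDirSolution [NeZero n] (F : Finset (DLink n)) : Prop :=
  ∀ C : Finset (Fin n), IsCut C → ∃ d ∈ F, DCovers d C

/-- `d'` is a shortening of `d`: same head, and the tail of `d'` lies on the
unique path between the endpoints of `d` in `(V, E \ {e_r})`. -/
def IsShortening (d' d : DLink n) : Prop :=
  d'.head = d.head ∧ min d.tail d.head ≤ d'.tail ∧ d'.tail ≤ max d.tail d.head

/-- A non-shortenable directed WRAP solution: deleting any link, or replacing
any link by a strict shortening of it, destroys feasibility. -/
def NonShortenable [NeZero n] (F : Finset (DLink n)) : Prop :=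
  IsDirSolution F ∧
    (∀ d ∈ F, ¬ IsDirSolution (F.erase d)) ∧
    (∀ d ∈ F, ∀ d' : DLink n, IsShortening d' d → d' ≠ d →
      ¬ IsDirSolution (insert d' (F.erase d)))

/-- `d` is a shadow of the undirected link `ℓ`: a shortening of one of the two
orientations of `ℓ`. -/
def IsShadow (d : DLink n) (ℓ : Link n) : Prop :=
  (d.head = ℓ.lo ∨ d.head = ℓ.hi) ∧ ℓ.lo ≤ d.tail ∧ d.tail ≤ ℓ.hi

/-- `u` is a descendant of `v` in `(V, F)` (every vertex is a descendant of
itself). -/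
def Descend (F : Finset (DLink n)) (v u : Fin n) : Prop :=
  Relation.ReflTransGen (fun a b => ∃ d ∈ F, d.tail = a ∧ d.head = b) v u

/-- `u` is `v`-good: not a descendant of `v` in `(V, F)`. -/
def VGood (F : Finset (DLink n)) (v u : Fin n) : Prop := ¬ Descend F v u

/-- `w` is the least common ancestor of the vertex set `U` in `(V, F)`. -/
def IsLCA (F : Finset (DLink n)) (w : Fin n) (U : Set (Fin n)) : Prop :=
  (∀ u ∈ U, Descend F w u) ∧ ∀ x : Fin n, (∀ u ∈ U, Descend F x u) → Descend F x w

/-- `d = (u,v)` is responsible for the 2-cut `C`: it covers `C` and no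
directed link of `F` on the `r`–`u` path in the arborescence `(V, F)`
(i.e. no link of `F` whose head is an ancestor of `u`) covers `C`. -/
def Responsible [NeZero n] (F : Finset (DLink n)) (d : DLink n)
    (C : Finset (Fin n)) : Prop :=
  IsCut C ∧ DCovers d C ∧
    ∀ d' ∈ F, Descend F d'.head d.tail → ¬ DCovers d' C

/-- `Drop_F(K)`: directed links of `F` all of whose responsible cuts
are covered by `K`. -/
def Drop [NeZero n] (F : Finset (DLink n)) (K : Finset (Link n)) : Set (DLink n) :=
  {d | d ∈ F ∧ ∀ C : Finset (Fin n), Responsible F d C → (cutLinks K C).Nonempty}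

/-- Two links are crossing: their endpoints interleave along the ring. -/
def Crossing (ℓ f : Link n) : Prop :=
  (ℓ.lo < f.lo ∧ f.lo < ℓ.hi ∧ ℓ.hi < f.hi) ∨
  (f.lo < ℓ.lo ∧ ℓ.lo < f.hi ∧ f.hi < ℓ.hi)

/-- Two links intersect: they share an endpoint or cross. -/
def Intersects (ℓ f : Link n) : Prop :=
  (ℓ.lo = f.lo ∨ ℓ.lo = f.hi ∨ ℓ.hi = f.lo ∨ ℓ.hi = f.hi) ∨ Crossing ℓ f

/-- The vertex `u` is connected to the vertex `w` in the link intersection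
graph `H[K]`: there is a path in `H[K]` from a link incident to `u` to a link
incident to `w`. -/
def ConnVert (K : Finset (Link n)) (u w : Fin n) : Prop :=
  ∃ ℓ ∈ K, ∃ f ∈ K, ℓ.Incident u ∧ f.Incident w ∧
    Relation.ReflTransGen (fun a b => a ∈ K ∧ b ∈ K ∧ Intersects a b) ℓ f

/-- The link intersection graph `H[S]` is connected. -/
def ConnLinkSet (S : Finset (Link n)) : Prop :=
  ∀ ℓ ∈ S, ∀ f ∈ S,
    Relation.ReflTransGen (fun a b => a ∈ S ∧ b ∈ S ∧ Intersects a b) ℓ f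

/-- `V(S)`: the vertices incident to a link of `S`. -/
def linkVerts (S : Finset (Link n)) : Set (Fin n) := {v | ∃ ℓ ∈ S, ℓ.Incident v}

/-- A festoon order: the links (listed as `f 0, f 1, …`) form a path in the
link intersection graph visited in this order, with both left endpoints and
right endpoints strictly increasing. -/
def IsFestoonSeq {p : ℕ} (f : Fin p → Link n) : Prop :=
  (∀ i j : Fin p, i < j → (f i).lo < (f j).lo ∧ (f i).hi < (f j).hi) ∧
  (∀ i j : Fin p, (i : ℕ) + 1 = (j : ℕ) → Intersects (f i) (f j)) ∧
  (∀ i j : Fin p, (i : ℕ) + 1 < (j : ℕ) → ¬ Intersects (f i) (f j))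

/-- A festoon: a nonempty link set admitting a festoon order. -/
def IsFestoon (X : Finset (Link n)) : Prop :=
  ∃ p : ℕ, 0 < p ∧ ∃ f : Fin p → Link n,
    IsFestoonSeq f ∧ X = Finset.image f Finset.univ

/-- The festoon interval `I_X`: the interval from the leftmost endpoint of a
link of `X` to the rightmost endpoint of a link of `X`. -/
def festoonIval (X : Finset (Link n)) : Set (Fin n) :=
  {w | (∃ ℓ ∈ X, ℓ.lo ≤ w) ∧ ∃ ℓ ∈ X, w ≤ ℓ.hi}

/-- Two festoons are tangled: some link of one intersects some link of the
other. -/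
def Tangled (X Y : Finset (Link n)) : Prop :=
  ∃ ℓ ∈ X, ∃ f ∈ Y, Intersects ℓ f

/-- A laminar family of vertex sets: any two members are nested or disjoint. -/
def Laminar (𝓛 : Set (Finset (Fin n))) : Prop :=
  ∀ A ∈ 𝓛, ∀ B ∈ 𝓛, A ⊆ B ∨ B ⊆ A ∨ Disjoint A B

/-- An inclusion-wise maximal laminar subfamily of `C_G`. -/
def MaxLaminarCuts [NeZero n] (𝓛 : Set (Finset (Fin n))) : Prop :=
  (∀ C ∈ 𝓛, IsCut C) ∧ Laminar 𝓛 ∧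
    ∀ C : Finset (Fin n), IsCut C → C ∉ 𝓛 → ¬ Laminar (insert C 𝓛)

/-- An `α`-thin link set. -/
def IsThin [NeZero n] (α : ℕ) (K : Finset (Link n)) : Prop :=
  ∃ 𝓛 : Set (Finset (Fin n)), MaxLaminarCuts 𝓛 ∧ ∀ C ∈ 𝓛, (cutLinks K C).card ≤ α

/-- The set `𝒳` of festoons connects `v` to a `v`-good vertex. -/
def ConnectsToGood (F : Finset (DLink n)) (v : Fin n)
    (𝒳 : Finset (Finset (Link n))) : Prop :=
  ∃ w : Fin n, VGood F v w ∧ ConnVert (𝒳.biUnion id) v w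

/-- The undirected graph obtained from a set of directed links by
disregarding orientations. -/
def undirGraph (F : Finset (DLink n)) : SimpleGraph (Fin n) where
  Adj a b := ∃ d ∈ F, (d.tail = a ∧ d.head = b) ∨ (d.tail = b ∧ d.head = a)
  symm := by
    constructor
    rintro a b ⟨d, hd, h⟩
    exact ⟨d, hd, h.symm⟩
  loopless := by
    constructor
    rintro a ⟨d, hd, h⟩
    rcases h with ⟨h1, h2⟩ | ⟨h1, h2⟩ <;> exact d.ne (h1.trans h2.symm)

/-- A directed link going to the left along the ring. -/
def LeftGoing (d : DLink n) : Prop := d.head < d.tail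

/-- A directed link going to the right along the ring. -/
def RightGoing (d : DLink n) : Prop := d.tail < d.head

section WSAux

variable {n : ℕ} {F : Finset (DLink (n + 3))}

private lemma ws_dlink_ext {d e : DLink (n + 3)} (ht : d.tail = e.tail)
    (hh : d.head = e.head) : d = e := by
  cases d; cases e; simp_all

private lemma ws_covers_iff {d : DLink (n + 3)} {a b : Fin (n + 3)} :
    DCovers d (Finset.Icc a b) ↔
      (a.val ≤ d.head.val ∧ d.head.val ≤ b.val ∧
        (d.tail.val < a.val ∨ b.val < d.tail.val)) := by
  simp only [DCovers, Finset.mem_Icc, Fin.le_def, Fin.lt_def]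
  omega

private lemma ws_isCut_Icc {a b : Fin (n + 3)} (ha : 0 < a.val) (hab : a.val ≤ b.val) :
    IsCut (Finset.Icc a b) :=
  ⟨a, b, by rw [Fin.lt_def]; simpa using ha, Fin.le_def.mpr hab, rfl⟩

private lemma ws_sol_covers (hsol : IsDirSolution F) {a b : Fin (n + 3)}
    (ha : 0 < a.val) (hab : a.val ≤ b.val) :
    ∃ d ∈ F, DCovers d (Finset.Icc a b) :=
  hsol _ (ws_isCut_Icc ha hab)

private lemma ws_exists_private (hF : NonShortenable F) {d : DLink (n + 3)} (hd : d ∈ F) :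
    ∃ a b : Fin (n + 3), 0 < a.val ∧ a.val ≤ b.val ∧ DCovers d (Finset.Icc a b) ∧
      ∀ e ∈ F, e ≠ d → ¬ DCovers e (Finset.Icc a b) := by
  have h := hF.2.1 d hd
  have hex : ∃ C, IsCut C ∧ ∀ e ∈ F.erase d, ¬ DCovers e C := by
    by_contra hcon
    push_neg at hcon
    exact h fun C hC => hcon C hC
  obtain ⟨C, hC, hnone⟩ := hex
  obtain ⟨a, b, ha, hab, rfl⟩ := hC
  obtain ⟨e, he, hcov⟩ := hF.1 _ ⟨a, b, ha, hab, rfl⟩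
  have hed : e = d := by
    by_contra hed
    exact hnone e (Finset.mem_erase.mpr ⟨hed, he⟩) hcov
  subst hed
  exact ⟨a, b, by simpa using Fin.lt_def.mp ha, Fin.le_def.mp hab, hcov,
    fun e' he' hne' => hnone e' (Finset.mem_erase.mpr ⟨hne', he'⟩)⟩

private lemma ws_exists_private_short (hF : NonShortenable F) {d : DLink (n + 3)}
    (hd : d ∈ F) (x : Fin (n + 3))
    (hxh : x.val ≠ d.head.val) (hxt : x.val ≠ d.tail.val)
    (hmin : min d.tail.val d.head.val ≤ x.val)
    (hmax : x.val ≤ max d.tail.val d.head.val) :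
    ∃ a b : Fin (n + 3), 0 < a.val ∧ a.val ≤ b.val ∧ DCovers d (Finset.Icc a b) ∧
      (a.val ≤ x.val ∧ x.val ≤ b.val) ∧
      ∀ e ∈ F, e ≠ d → ¬ DCovers e (Finset.Icc a b) := by
  have hshort : IsShortening ⟨x, d.head, Fin.ne_of_val_ne hxh⟩ d := by
    refine ⟨rfl, ?_, ?_⟩
    · exact min_le_iff.mpr ((min_le_iff.mp hmin).imp Fin.le_def.mpr Fin.le_def.mpr)
    · exact le_max_iff.mpr ((le_max_iff.mp hmax).imp Fin.le_def.mpr Fin.le_def.mpr)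
  have hne : (⟨x, d.head, Fin.ne_of_val_ne hxh⟩ : DLink (n + 3)) ≠ d := by
    intro h
    exact hxt (congrArg (fun e => e.tail.val) h)
  have h := hF.2.2 d hd _ hshort hne
  have hex : ∃ C, IsCut C ∧
      ∀ e ∈ insert (⟨x, d.head, Fin.ne_of_val_ne hxh⟩ : DLink (n + 3)) (F.erase d),
        ¬ DCovers e C := by
    by_contra hcon
    push_neg at hcon
    exact h fun C hC => hcon C hC
  obtain ⟨C, hC, hnone⟩ := hex
  obtain ⟨a, b, ha, hab, rfl⟩ := hC
  obtain ⟨e, he, hcov⟩ := hF.1 _ ⟨a, b, ha, hab, rfl⟩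
  have hed : d = e := by
    by_contra hed
    exact hnone e (Finset.mem_insert_of_mem
      (Finset.mem_erase.mpr ⟨fun hh => hed hh.symm, he⟩)) hcov
  subst hed
  have hnd' := hnone _ (Finset.mem_insert_self _ _)
  refine ⟨a, b, by simpa using Fin.lt_def.mp ha, Fin.le_def.mp hab, hcov, ?_,
    fun e' he' hne' => hnone e' (Finset.mem_insert_of_mem (Finset.mem_erase.mpr ⟨hne', he'⟩))⟩
  rw [ws_covers_iff] at hcov hnd'
  have hnd'' : ¬ (a.val ≤ d.head.val ∧ d.head.val ≤ b.val ∧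
      (x.val < a.val ∨ b.val < x.val)) := hnd'
  omega

private lemma ws_swap_sol (hsol : IsDirSolution F) {d : DLink (n + 3)} (d' : DLink (n + 3))
    (h : ∀ a b : Fin (n + 3), DCovers d (Finset.Icc a b) →
      DCovers d' (Finset.Icc a b) ∨ ∃ e ∈ F, e ≠ d ∧ DCovers e (Finset.Icc a b)) :
    IsDirSolution (insert d' (F.erase d)) := by
  rintro C ⟨a, b, ha, hab, rfl⟩
  obtain ⟨e, he, hcov⟩ := hsol _ ⟨a, b, ha, hab, rfl⟩
  by_cases hed : e = d
  · subst hed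
    rcases h a b hcov with h1 | ⟨e', he', hne', hc'⟩
    · exact ⟨d', Finset.mem_insert_self _ _, h1⟩
    · exact ⟨e', Finset.mem_insert_of_mem (Finset.mem_erase.mpr ⟨hne', he'⟩), hc'⟩
  · exact ⟨e, Finset.mem_insert_of_mem (Finset.mem_erase.mpr ⟨hed, he⟩), hcov⟩

private lemma ws_head_ne_zero (hF : NonShortenable F) {d : DLink (n + 3)} (hd : d ∈ F) :
    d.head ≠ 0 := by
  intro h0
  apply hF.2.1 d hd
  rintro C ⟨a, b, ha, hab, rfl⟩
  obtain ⟨e, he, hcov⟩ := hF.1 _ ⟨a, b, ha, hab, rfl⟩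
  refine ⟨e, Finset.mem_erase.mpr ⟨?_, he⟩, hcov⟩
  rintro rfl
  rw [ws_covers_iff] at hcov
  rw [h0] at hcov
  have ha' : 0 < a.val := by simpa using Fin.lt_def.mp ha
  have h1 : a.val ≤ 0 := by simpa using hcov.1
  omega

private lemma ws_not_between (hF : NonShortenable F) {dout din : DLink (n + 3)}
    (hout : dout ∈ F) (hin : din ∈ F) (hne : dout ≠ din)
    (hh : dout.head.val = din.head.val)
    (hbet : (dout.tail.val < din.tail.val ∧ din.tail.val < din.head.val) ∨
            (din.head.val < din.tail.val ∧ din.tail.val < dout.tail.val)) : False := by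
  apply hF.2.1 din hin
  rintro C ⟨a, b, ha, hab, rfl⟩
  obtain ⟨e, he, hcov⟩ := hF.1 _ ⟨a, b, ha, hab, rfl⟩
  by_cases hed : e = din
  · subst hed
    refine ⟨dout, Finset.mem_erase.mpr ⟨hne, hout⟩, ?_⟩
    rw [ws_covers_iff] at hcov ⊢
    omega
  · exact ⟨e, Finset.mem_erase.mpr ⟨hed, he⟩, hcov⟩

private lemma ws_not_opposite (hF : NonShortenable F) {d₁ d₂ : DLink (n + 3)}
    (h1 : d₁ ∈ F) (h2 : d₂ ∈ F) (hne : d₁ ≠ d₂)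
    (hh : d₁.head.val = d₂.head.val)
    (ho1 : d₁.tail.val < d₁.head.val) (ho2 : d₂.head.val < d₂.tail.val) : False := by
  obtain ⟨a₁, b₁, ha₁, hab₁, hc₁, hp₁⟩ := ws_exists_private hF h1
  obtain ⟨a₂, b₂, ha₂, hab₂, hc₂, hp₂⟩ := ws_exists_private hF h2
  have hn₂ := hp₂ d₁ h1 hne
  have hn₁ := hp₁ d₂ h2 (Ne.symm hne)
  rw [ws_covers_iff] at hc₁ hc₂ hn₁ hn₂
  obtain ⟨e, he, hce⟩ := ws_sol_covers hF.1 (a := a₂) (b := b₁) ha₂ (by omega)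
  rw [ws_covers_iff] at hce
  by_cases he1 : e = d₁
  · subst he1; omega
  by_cases he2 : e = d₂
  · subst he2; omega
  have hq₁ := hp₁ e he he1
  have hq₂ := hp₂ e he he2
  rw [ws_covers_iff] at hq₁ hq₂
  omega

private lemma ws_incoming_unique (hF : NonShortenable F) {d₁ d₂ : DLink (n + 3)}
    (h1 : d₁ ∈ F) (h2 : d₂ ∈ F) (hh : d₁.head = d₂.head) : d₁ = d₂ := by
  by_contra hne
  have hhv : d₁.head.val = d₂.head.val := congrArg Fin.val hh
  have htv : d₁.tail.val ≠ d₂.tail.val := fun h => hne (ws_dlink_ext (Fin.ext h) hh)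
  rcases Nat.lt_trichotomy d₁.tail.val d₁.head.val with ho1 | ho1 | ho1
  · rcases Nat.lt_trichotomy d₂.tail.val d₂.head.val with ho2 | ho2 | ho2
    · rcases Nat.lt_or_ge d₁.tail.val d₂.tail.val with hlt | hge
      · exact ws_not_between hF h1 h2 hne hhv (Or.inl ⟨hlt, ho2⟩)
      · exact ws_not_between hF h2 h1 (Ne.symm hne) hhv.symm (Or.inl ⟨by omega, by omega⟩)
    · exact d₂.ne (Fin.ext ho2)
    · exact ws_not_opposite hF h1 h2 hne hhv ho1 ho2
  · exact d₁.ne (Fin.ext ho1)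
  · rcases Nat.lt_trichotomy d₂.tail.val d₂.head.val with ho2 | ho2 | ho2
    · exact ws_not_opposite hF h2 h1 (Ne.symm hne) hhv.symm ho2 ho1
    · exact d₂.ne (Fin.ext ho2)
    · rcases Nat.lt_or_ge d₁.tail.val d₂.tail.val with hlt | hge
      · exact ws_not_between hF h2 h1 (Ne.symm hne) hhv.symm (Or.inr ⟨by omega, hlt⟩)
      · exact ws_not_between hF h1 h2 hne hhv (Or.inr ⟨by omega, by omega⟩)

private lemma ws_exists_unique_incoming (hF : NonShortenable F) (v : Fin (n + 3))
    (hv : v ≠ 0) : ∃! d : DLink (n + 3), d ∈ F ∧ d.head = v := by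
  have hvpos : 0 < v.val := Nat.pos_of_ne_zero (fun h => hv (Fin.ext (by simp [h])))
  obtain ⟨d, hd, hcov⟩ := ws_sol_covers hF.1 (a := v) (b := v) hvpos le_rfl
  rw [ws_covers_iff] at hcov
  have hdv : d.head = v := Fin.ext (le_antisymm hcov.2.1 hcov.1)
  exact ⟨d, ⟨hd, hdv⟩, fun e he => ws_incoming_unique hF he.1 hd (by rw [he.2, hdv])⟩

private lemma ws_exists_enter {C : Finset (Fin (n + 3))} {x y : Fin (n + 3)}
    (h : Descend F x y) (hx : x ∉ C) :
    y ∈ C → ∃ d ∈ F, DCovers d C ∧ Descend F x d.tail := by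
  have h' : Relation.ReflTransGen (fun a b => ∃ d ∈ F, d.tail = a ∧ d.head = b) x y := h
  clear h
  induction h' with
  | refl => exact fun hy => absurd hy hx
  | @tail b c hxb hbc ih =>
    intro hc
    by_cases hb : b ∈ C
    · exact ih hb
    · obtain ⟨d, hd, hta, hhe⟩ := hbc
      exact ⟨d, hd, ⟨by rw [hta]; exact hb, by rw [hhe]; exact hc⟩, by rw [hta]; exact hxb⟩

private lemma ws_reach (hF : NonShortenable F) (v : Fin (n + 3)) : Descend F 0 v := by
  classical
  by_contra hv
  have hP : ∃ k, k ≤ v.val ∧ ∀ y : Fin (n + 3), k ≤ y.val → y.val ≤ v.val →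
      ¬ Descend F 0 y :=
    ⟨v.val, le_rfl, fun y h1 h2 => by
      have hyv : y = v := Fin.ext (le_antisymm h2 h1)
      rwa [hyv]⟩
  obtain ⟨aN, haN⟩ : ∃ k, Nat.find hP = k := ⟨_, rfl⟩
  have haNv : aN ≤ v.val := haN ▸ (Nat.find_spec hP).1
  have haBad : ∀ y : Fin (n + 3), aN ≤ y.val → y.val ≤ v.val → ¬ Descend F 0 y :=
    haN ▸ (Nat.find_spec hP).2
  have ha0 : 0 < aN := by
    by_contra h0
    push_neg at h0
    exact haBad 0 (by simp; omega) (by simp) Relation.ReflTransGen.refl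
  have hgoodL : ∃ y : Fin (n + 3), y.val = aN - 1 ∧ Descend F 0 y := by
    have hmin := Nat.find_min hP (show aN - 1 < Nat.find hP by omega)
    push_neg at hmin
    obtain ⟨y, hy1, hy2, hy3⟩ := hmin (by omega)
    refine ⟨y, ?_, hy3⟩
    by_contra hne
    exact haBad y (by omega) hy2 hy3
  obtain ⟨y₀, hy₀v, hy₀d⟩ := hgoodL
  have hvn2 : v.val ≤ n + 2 := by have := v.isLt; omega
  set Q : ℕ → Prop := fun k => v.val ≤ k ∧ ∀ y : Fin (n + 3), v.val ≤ y.val →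
      y.val ≤ k → ¬ Descend F 0 y with hQdef
  have hQv : Q v.val :=
    ⟨le_rfl, fun y h1 h2 => by
      have hyv : y = v := Fin.ext (le_antisymm h2 h1)
      rwa [hyv]⟩
  obtain ⟨bN, hbN⟩ : ∃ k, Nat.findGreatest Q (n + 2) = k := ⟨_, rfl⟩
  have hvb : v.val ≤ bN := hbN ▸ Nat.le_findGreatest hvn2 hQv
  have hQb : Q bN := hbN ▸ Nat.findGreatest_spec hvn2 hQv
  have hbn2 : bN ≤ n + 2 := hbN ▸ Nat.findGreatest_le _
  have hafin : aN < n + 3 := by have := v.isLt; omega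
  have hbfin : bN < n + 3 := by omega
  have habN : aN ≤ bN := by omega
  obtain ⟨e, he, hcov⟩ := ws_sol_covers hF.1 (a := ⟨aN, hafin⟩) (b := ⟨bN, hbfin⟩)
    ha0 habN
  rw [ws_covers_iff] at hcov
  have hcov' : aN ≤ e.head.val ∧ e.head.val ≤ bN ∧
      (e.tail.val < aN ∨ bN < e.tail.val) := hcov
  clear hcov
  have hbadhead : ¬ Descend F 0 e.head := by
    rcases le_or_gt e.head.val v.val with hle | hlt
    · exact haBad e.head (by omega) hle
    · exact hQb.2 e.head (by omega) (by omega)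
  have hbadtail : ¬ Descend F 0 e.tail := fun hdt =>
    hbadhead (Relation.ReflTransGen.tail hdt ⟨e, he, rfl, rfl⟩)
  have hzeronot : ∀ {α β : Fin (n + 3)}, 0 < α.val → (0 : Fin (n + 3)) ∉ Finset.Icc α β := by
    intro α β hα hmem
    rw [Finset.mem_Icc] at hmem
    have h1 := Fin.le_def.mp hmem.1
    simp only [Fin.val_zero] at h1
    omega
  rcases hcov'.2.2 with htl | htr
  · have hty : e.tail.val ≠ aN - 1 := by
      intro hh
      apply hbadtail
      have het : e.tail = y₀ := Fin.ext (by omega)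
      rw [het]; exact hy₀d
    obtain ⟨α, β, hα, hαβ, hcC, hxC, hpC⟩ := ws_exists_private_short hF he y₀
      (by omega) (by omega) (by omega) (by omega)
    obtain ⟨d'', hd'', hdc, hdt⟩ := ws_exists_enter hy₀d (hzeronot hα)
      (Finset.mem_Icc.mpr ⟨Fin.le_def.mpr (show α.val ≤ y₀.val by omega),
        Fin.le_def.mpr (show y₀.val ≤ β.val by omega)⟩)
    have hde : d'' = e := by
      by_contra hne'
      exact hpC d'' hd'' hne' hdc
    exact hbadtail (hde ▸ hdt)
  · have hbnlt : bN < n + 2 := by have := e.tail.isLt; omega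
    have hgoodR : ∃ z : Fin (n + 3), z.val = bN + 1 ∧ Descend F 0 z := by
      have hng := Nat.findGreatest_is_greatest (P := Q)
        (show Nat.findGreatest Q (n + 2) < bN + 1 by omega)
        (show bN + 1 ≤ n + 2 by omega)
      simp only [hQdef] at hng
      push_neg at hng
      obtain ⟨z, hz1, hz2, hz3⟩ := hng (by omega)
      refine ⟨z, ?_, hz3⟩
      by_contra hne'
      exact hQb.2 z hz1 (by omega) hz3
    obtain ⟨z₀, hz₀v, hz₀d⟩ := hgoodR
    have hty : e.tail.val ≠ bN + 1 := by
      intro hh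
      apply hbadtail
      have het : e.tail = z₀ := Fin.ext (by omega)
      rw [het]; exact hz₀d
    obtain ⟨α, β, hα, hαβ, hcC, hxC, hpC⟩ := ws_exists_private_short hF he z₀
      (by omega) (by omega) (by omega) (by omega)
    obtain ⟨d'', hd'', hdc, hdt⟩ := ws_exists_enter hz₀d (hzeronot hα)
      (Finset.mem_Icc.mpr ⟨Fin.le_def.mpr (show α.val ≤ z₀.val by omega),
        Fin.le_def.mpr (show z₀.val ≤ β.val by omega)⟩)
    have hde : d'' = e := by
      by_contra hne'
      exact hpC d'' hd'' hne' hdc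
    exact hbadtail (hde ▸ hdt)

private def ws_chains (F : Finset (DLink (n + 3))) : ℕ → Fin (n + 3) → Prop
  | 0, u => u = 0
  | k + 1, u => ∃ d ∈ F, d.head = u ∧ ws_chains F k d.tail

private lemma ws_chains_exists {u : Fin (n + 3)} (h : Descend F 0 u) :
    ∃ k, ws_chains F k u := by
  have h' : Relation.ReflTransGen (fun a b => ∃ d ∈ F, d.tail = a ∧ d.head = b) 0 u := h
  clear h
  induction h' with
  | refl => exact ⟨0, rfl⟩
  | tail _ hbc ih =>
    obtain ⟨k, hk⟩ := ih
    obtain ⟨d, hd, hta, hhe⟩ := hbc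
    exact ⟨k + 1, d, hd, hhe, by rw [hta]; exact hk⟩

private lemma ws_chains_zero {u : Fin (n + 3)} : ws_chains F 0 u ↔ u = 0 := Iff.rfl

private lemma ws_chains_succ {k : ℕ} {u : Fin (n + 3)} :
    ws_chains F (k + 1) u ↔ ∃ d ∈ F, d.head = u ∧ ws_chains F k d.tail := Iff.rfl

private lemma ws_acyclic (hF : NonShortenable F) : (undirGraph F).IsAcyclic := by
  classical
  have hchain : ∀ v : Fin (n + 3), ∃ k, ws_chains F k v :=
    fun v => ws_chains_exists (ws_reach hF v)
  set rank : Fin (n + 3) → ℕ := fun v => Nat.find (hchain v) with hrankdef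
  have hrs : ∀ v, ws_chains F (rank v) v := fun v => Nat.find_spec (hchain v)
  have hrm : ∀ v k, ws_chains F k v → rank v ≤ k := fun v k h => Nat.find_min' (hchain v) h
  have hstep : ∀ d ∈ F, rank d.head = rank d.tail + 1 := by
    intro d hd
    have h1 : rank d.head ≤ rank d.tail + 1 :=
      hrm _ _ (ws_chains_succ.mpr ⟨d, hd, rfl, hrs _⟩)
    have h2 : rank d.tail + 1 ≤ rank d.head := by
      have hc := hrs d.head
      rcases hk : rank d.head with _ | k
      · rw [hk] at hc
        exact absurd (ws_chains_zero.mp hc) (ws_head_ne_zero hF hd)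
      · rw [hk] at hc
        obtain ⟨d', hd', hh', hc'⟩ := ws_chains_succ.mp hc
        have hdd : d' = d := ws_incoming_unique hF hd' hd hh'
        subst hdd
        have := hrm _ _ hc'
        omega
    omega
  intro u0 c hc
  have hmemu0 : u0 ∈ c.support.toFinset := List.mem_toFinset.mpr c.start_mem_support
  obtain ⟨u, humem', humax'⟩ := Finset.exists_max_image c.support.toFinset rank ⟨u0, hmemu0⟩
  have humem : u ∈ c.support := List.mem_toFinset.mp humem'
  set c' := c.rotate u humem with hc'def
  have hcyc : c'.IsCycle := hc.rotate humem
  have hmax : ∀ z, z ∈ c'.support → rank z ≤ rank u := by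
    intro z hz
    apply humax'
    rw [List.mem_toFinset]
    have hrot := SimpleGraph.Walk.support_rotate c u humem
    rw [SimpleGraph.Walk.support_eq_cons c'] at hz
    rcases List.mem_cons.mp hz with rfl | hz'
    · exact humem
    · exact List.mem_of_mem_tail (hrot.perm.mem_iff.mp hz')
  obtain ⟨x, hadjx, q, hq⟩ := SimpleGraph.Walk.not_nil_iff.mp hcyc.not_nil
  have hrevnil : ¬ c'.reverse.Nil := by
    rw [SimpleGraph.Walk.not_nil_iff_lt_length, SimpleGraph.Walk.length_reverse]
    have := hcyc.three_le_length
    omega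
  obtain ⟨y, hadjy, q2, hq2⟩ := SimpleGraph.Walk.not_nil_iff.mp hrevnil
  have hgetd : ∀ z, (undirGraph F).Adj u z → z ∈ c'.support →
      ∃ d ∈ F, d.tail = z ∧ d.head = u := by
    intro z hadj hzmem
    obtain ⟨d, hd, hor⟩ := hadj
    rcases hor with ⟨ht', hh'⟩ | ⟨ht', hh'⟩
    · exfalso
      have hs := hstep d hd
      rw [ht', hh'] at hs
      have := hmax z hzmem
      omega
    · exact ⟨d, hd, ht', hh'⟩
  have hxs : x ∈ c'.support := by
    rw [hq, SimpleGraph.Walk.support_cons]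
    exact List.mem_cons_of_mem _ q.start_mem_support
  have hys : y ∈ c'.support := by
    have hmem : y ∈ c'.reverse.support := by
      rw [hq2, SimpleGraph.Walk.support_cons]
      exact List.mem_cons_of_mem _ q2.start_mem_support
    rw [SimpleGraph.Walk.support_reverse] at hmem
    exact List.mem_reverse.mp hmem
  obtain ⟨d₁, hd₁, hxt, hxh⟩ := hgetd x hadjx hxs
  obtain ⟨d₂, hd₂, hyt, hyh⟩ := hgetd y hadjy hys
  have hd12 : d₁ = d₂ := ws_incoming_unique hF hd₁ hd₂ (by rw [hxh, hyh])
  have hxy : x = y := by rw [← hxt, ← hyt, hd12]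
  subst hxy
  have hedges : c'.edges = s(u, x) :: q.edges := by
    rw [hq, SimpleGraph.Walk.edges_cons]
  have hlast : c'.edges = q2.reverse.edges ++ [s(x, u)] := by
    conv_lhs => rw [← SimpleGraph.Walk.reverse_reverse c', hq2]
    rw [SimpleGraph.Walk.reverse_cons, SimpleGraph.Walk.edges_append,
      SimpleGraph.Walk.edges_cons, SimpleGraph.Walk.edges_nil]
  rcases hqe : q2.reverse.edges with _ | ⟨b0, t0⟩
  · rw [hqe] at hlast
    have hlen := SimpleGraph.Walk.length_edges c'
    rw [hlast] at hlen
    simp at hlen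
    have := hcyc.three_le_length
    omega
  · rw [hqe, List.cons_append] at hlast
    rw [hedges] at hlast
    obtain ⟨hb0, hrest⟩ := List.cons_eq_cons.mp hlast
    have hnd := hcyc.isCircuit.isTrail.edges_nodup
    rw [hedges] at hnd
    apply (List.nodup_cons.mp hnd).1
    rw [hrest, Sym2.eq_swap]
    simp

private lemma ws_caseA (hF : NonShortenable F) {d₁ d₂ : DLink (n + 3)}
    (h1 : d₁ ∈ F) (h2 : d₂ ∈ F) (ht : d₁.tail.val ≤ d₂.tail.val)
    (h3 : d₂.tail.val < d₁.head.val) (h4 : d₁.head.val < d₂.head.val) : False := by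
  have hne : d₁ ≠ d₂ := fun h => by rw [h] at h4; omega
  apply hF.2.2 d₂ h2 ⟨d₁.head, d₂.head, Fin.ne_of_val_ne (by omega)⟩
    ⟨rfl, min_le_iff.mpr (Or.inl (Fin.le_def.mpr
        (show d₂.tail.val ≤ d₁.head.val by omega))),
      le_max_iff.mpr (Or.inr (Fin.le_def.mpr
        (show d₁.head.val ≤ d₂.head.val by omega)))⟩
    (fun h => by
      have h' : d₁.head.val = d₂.tail.val := congrArg (fun e => e.tail.val) h
      omega)
  apply ws_swap_sol hF.1
  intro a b hcov
  rw [ws_covers_iff] at hcov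
  by_cases hca : d₁.head.val < a.val
  · left
    rw [ws_covers_iff]
    exact (by omega : a.val ≤ d₂.head.val ∧ d₂.head.val ≤ b.val ∧
      (d₁.head.val < a.val ∨ b.val < d₁.head.val))
  · right
    exact ⟨d₁, h1, hne, by rw [ws_covers_iff]; omega⟩

private lemma ws_caseD (hF : NonShortenable F) {d₁ d₂ : DLink (n + 3)}
    (h1 : d₁ ∈ F) (h2 : d₂ ∈ F) (hh : d₁.head.val < d₂.head.val)
    (h3 : d₂.head.val < d₁.tail.val) (ht : d₁.tail.val ≤ d₂.tail.val) : False := by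
  have hne : d₂ ≠ d₁ := fun h => by rw [h] at hh; omega
  apply hF.2.2 d₁ h1 ⟨d₂.head, d₁.head, Fin.ne_of_val_ne (by omega)⟩
    ⟨rfl, min_le_iff.mpr (Or.inr (Fin.le_def.mpr
        (show d₁.head.val ≤ d₂.head.val by omega))),
      le_max_iff.mpr (Or.inl (Fin.le_def.mpr
        (show d₂.head.val ≤ d₁.tail.val by omega)))⟩
    (fun h => by
      have h' : d₂.head.val = d₁.tail.val := congrArg (fun e => e.tail.val) h
      omega)
  apply ws_swap_sol hF.1
  intro a b hcov
  rw [ws_covers_iff] at hcov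
  by_cases hcb : b.val < d₂.head.val
  · left
    rw [ws_covers_iff]
    exact (by omega : a.val ≤ d₁.head.val ∧ d₁.head.val ≤ b.val ∧
      (d₂.head.val < a.val ∨ b.val < d₂.head.val))
  · right
    exact ⟨d₂, h2, hne, by rw [ws_covers_iff]; omega⟩

private lemma ws_caseB (hF : NonShortenable F) {d₁ d₂ : DLink (n + 3)}
    (h1 : d₁ ∈ F) (h2 : d₂ ∈ F) (hA : d₁.tail.val < d₂.head.val)
    (hB : d₂.head.val < d₁.head.val) (hC : d₁.head.val < d₂.tail.val) : False := by
  have hne : d₁ ≠ d₂ := fun h => by rw [h] at hB; omega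
  obtain ⟨α₁, β₁, hα₁, hαβ₁, hc1, hx1, hp1⟩ := ws_exists_private_short hF h2 d₁.head
    (by omega) (by omega) (by omega) (by omega)
  obtain ⟨α₂, β₂, hα₂, hαβ₂, hc2, hx2, hp2⟩ := ws_exists_private_short hF h1 d₂.head
    (by omega) (by omega) (by omega) (by omega)
  rw [ws_covers_iff] at hc1 hc2
  have hq1 := hp1 d₁ h1 hne
  have hq2 := hp2 d₂ h2 (Ne.symm hne)
  rw [ws_covers_iff] at hq1 hq2
  obtain ⟨e, he, hce⟩ := ws_sol_covers hF.1 (a := α₁) (b := β₂) hα₁ (by omega)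
  rw [ws_covers_iff] at hce
  by_cases he1 : e = d₁
  · subst he1; omega
  by_cases he2 : e = d₂
  · subst he2; omega
  have hr1 := hp1 e he he2
  have hr2 := hp2 e he he1
  rw [ws_covers_iff] at hr1 hr2
  omega

private lemma ws_caseC (hF : NonShortenable F) {d₁ d₂ : DLink (n + 3)}
    (h1 : d₁ ∈ F) (h2 : d₂ ∈ F) (hA : d₁.head.val < d₂.tail.val)
    (hB : d₂.tail.val < d₁.tail.val) (hC : d₁.tail.val < d₂.head.val) : False := by
  have hne : d₁ ≠ d₂ := fun h => by rw [h] at hB; omega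
  obtain ⟨α₁, β₁, hα₁, hαβ₁, hc1, hx1, hp1⟩ := ws_exists_private_short hF h1 d₂.tail
    (by omega) (by omega) (by omega) (by omega)
  rw [ws_covers_iff] at hc1
  have hβ₁ : β₁.val < d₁.tail.val := by omega
  have hw : β₁.val + 1 < n + 3 := by have := d₁.tail.isLt; omega
  obtain ⟨α₂, β₂, hα₂, hαβ₂, hc2, hx2', hp2⟩ := ws_exists_private_short hF h2
    (⟨β₁.val + 1, hw⟩ : Fin (n + 3))
    (show β₁.val + 1 ≠ d₂.head.val by omega)
    (show β₁.val + 1 ≠ d₂.tail.val by omega)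
    (show min d₂.tail.val d₂.head.val ≤ β₁.val + 1 by omega)
    (show β₁.val + 1 ≤ max d₂.tail.val d₂.head.val by omega)
  have hx2 : α₂.val ≤ β₁.val + 1 ∧ β₁.val + 1 ≤ β₂.val := hx2'
  rw [ws_covers_iff] at hc2
  obtain ⟨e, he, hce⟩ := ws_sol_covers hF.1 (a := α₁) (b := β₂) hα₁ (by omega)
  rw [ws_covers_iff] at hce
  by_cases he1 : e = d₁
  · subst he1; omega
  by_cases he2 : e = d₂
  · subst he2; omega
  have hr1 := hp1 e he he1
  have hr2 := hp2 e he he2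
  rw [ws_covers_iff] at hr1 hr2
  omega

private lemma ws_no_cross (hF : NonShortenable F) {d₁ d₂ : DLink (n + 3)}
    (h1 : d₁ ∈ F) (h2 : d₂ ∈ F) : ¬ Crossing d₁.toLink d₂.toLink := by
  intro hcr
  simp only [Crossing, DLink.toLink] at hcr
  rcases Ne.lt_or_gt d₁.ne with o1 | o1 <;> rcases Ne.lt_or_gt d₂.ne with o2 | o2
  · rw [min_eq_left o1.le, max_eq_right o1.le, min_eq_left o2.le, max_eq_right o2.le] at hcr
    simp only [Fin.lt_def] at hcr
    rcases hcr with ⟨c1, c2, c3⟩ | ⟨c1, c2, c3⟩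
    · exact ws_caseA hF h1 h2 (le_of_lt c1) c2 c3
    · exact ws_caseA hF h2 h1 (le_of_lt c1) c2 c3
  · rw [min_eq_left o1.le, max_eq_right o1.le, min_eq_right o2.le, max_eq_left o2.le] at hcr
    simp only [Fin.lt_def] at hcr
    rcases hcr with ⟨c1, c2, c3⟩ | ⟨c1, c2, c3⟩
    · exact ws_caseB hF h1 h2 c1 c2 c3
    · exact ws_caseC hF h2 h1 c1 c2 c3
  · rw [min_eq_right o1.le, max_eq_left o1.le, min_eq_left o2.le, max_eq_right o2.le] at hcr
    simp only [Fin.lt_def] at hcr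
    rcases hcr with ⟨c1, c2, c3⟩ | ⟨c1, c2, c3⟩
    · exact ws_caseC hF h1 h2 c1 c2 c3
    · exact ws_caseB hF h2 h1 c1 c2 c3
  · rw [min_eq_right o1.le, max_eq_left o1.le, min_eq_right o2.le, max_eq_left o2.le] at hcr
    simp only [Fin.lt_def] at hcr
    rcases hcr with ⟨c1, c2, c3⟩ | ⟨c1, c2, c3⟩
    · exact ws_caseD hF h1 h2 c1 c2 (le_of_lt c3)
    · exact ws_caseD hF h2 h1 c1 c2 (le_of_lt c3)

private lemma ws_tails (hF : NonShortenable F) {d₁ d₂ : DLink (n + 3)}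
    (h1 : d₁ ∈ F) (h2 : d₂ ∈ F) (ht : d₁.tail = d₂.tail)
    (hd : (LeftGoing d₁ ∧ LeftGoing d₂) ∨ (RightGoing d₁ ∧ RightGoing d₂)) : d₁ = d₂ := by
  by_cases hh : d₁.head = d₂.head
  · exact ws_dlink_ext ht hh
  exfalso
  have htv : d₁.tail.val = d₂.tail.val := congrArg Fin.val ht
  have hhv : d₁.head.val ≠ d₂.head.val := fun h => hh (Fin.ext h)
  rcases hd with ⟨l1, l2⟩ | ⟨r1, r2⟩
  · have l1' := Fin.lt_def.mp l1
    have l2' := Fin.lt_def.mp l2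
    rcases Nat.lt_or_ge d₁.head.val d₂.head.val with hlt | hge
    · exact ws_caseD hF h1 h2 hlt (by omega) (by omega)
    · exact ws_caseD hF h2 h1 (by omega) (by omega) (by omega)
  · have r1' := Fin.lt_def.mp r1
    have r2' := Fin.lt_def.mp r2
    rcases Nat.lt_or_ge d₁.head.val d₂.head.val with hlt | hge
    · exact ws_caseA hF h1 h2 (by omega) (by omega) (by omega)
    · exact ws_caseA hF h2 h1 (by omega) (by omega) (by omega)

end WSAux

/-- structure of non-shortenable directed WRAP solutions.
(i) `(V, F)` is an `r`-arborescence: every `v ≠ r` has exactly one incoming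
directed link, `r` has none, and `(V, F)` is acyclic disregarding orientation;
(ii) `F` is `G`-planar: no two of its links cross;
(iii) for every vertex `v`, at most one link of `F` with tail `v` is
left-going and at most one is right-going. -/
theorem structure_of_nonshortenable {n : ℕ}
    (L : Finset (Link (n + 3))) (c : Link (n + 3) → ℝ)
    (F : Finset (DLink (n + 3))) (hF : NonShortenable F) :
    ((∀ v : Fin (n + 3), v ≠ 0 → ∃! d : DLink (n + 3), d ∈ F ∧ d.head = v) ∧
        (∀ d ∈ F, d.head ≠ 0) ∧ (undirGraph F).IsAcyclic) ∧
      (∀ d₁ ∈ F, ∀ d₂ ∈ F, ¬ Crossing d₁.toLink d₂.toLink) ∧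
      (∀ v : Fin (n + 3), ∀ d₁ ∈ F, ∀ d₂ ∈ F, d₁.tail = v → d₂.tail = v →
        ((LeftGoing d₁ ∧ LeftGoing d₂) ∨ (RightGoing d₁ ∧ RightGoing d₂)) →
          d₁ = d₂) := by
  refine ⟨⟨fun v hv => ws_exists_unique_incoming hF v hv,
      fun d hd => ws_head_ne_zero hF hd, ws_acyclic hF⟩,
    fun d₁ h1 d₂ h2 => ws_no_cross hF h1 h2,
    fun v d₁ h1 d₂ h2 ht1 ht2 hd => ws_tails hF h1 h2 (ht1.trans ht2.symm) hd⟩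
end

section
/- Let (G, L, c, r, e_r) be a rooted WRAP instance and F⃗ a non-shortenable directed WRAP solution. Then for every v ∈ V, the set of descendants of v in the arborescence (V, F⃗) (including v itself) is an interval of consecutive vertices along the path (V, E \ {e_r}). -/
variable {n : ℕ}

section AuxProofs

variable {m : ℕ}

private lemma zero_not_mem_cut {C : Finset (Fin (m + 3))} (h : IsCut C) :
    (0 : Fin (m + 3)) ∉ C := by
  obtain ⟨a, b, ha, hab, rfl⟩ := h
  intro hm
  rw [Finset.mem_Icc] at hm
  exact absurd hm.1 (not_le.mpr ha)

/-- If a walk in `F` starts outside a set `C` and ends inside, some link of `F`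
enters `C`, with its tail reachable from the start and the end reachable from
its head. -/
private lemma enters_cut (F : Finset (DLink (m + 3))) {a b : Fin (m + 3)}
    {C : Finset (Fin (m + 3))} (h : Descend F a b) (ha : a ∉ C) (hb : b ∈ C) :
    ∃ f ∈ F, f.tail ∉ C ∧ f.head ∈ C ∧ Descend F a f.tail ∧ Descend F f.head b := by
  induction h with
  | refl => exact absurd hb ha
  | @tail w u hw hstep ih =>
    by_cases hwC : w ∈ C
    · obtain ⟨f, hf, h1, h2, h3, h4⟩ := ih hwC
      exact ⟨f, hf, h1, h2, h3, h4.tail hstep⟩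
    · obtain ⟨d, hd, hdt, hdh⟩ := hstep
      refine ⟨d, hd, ?_, ?_, ?_, ?_⟩
      · rw [hdt]; exact hwC
      · rw [hdh]; exact hb
      · rw [hdt]; exact hw
      · exact hdh ▸ Relation.ReflTransGen.refl

/-- In a non-shortenable solution, every vertex is reachable from the root. -/
private lemma reach_root (F : Finset (DLink (m + 3))) (hF : NonShortenable F)
    (w : Fin (m + 3)) : Descend F 0 w := by
  classical
  by_contra hw
  set B : Finset (Fin (m + 3)) := Finset.univ.filter (fun u => ¬ Descend F 0 u) with hB
  have hmemB : ∀ u, u ∈ B ↔ ¬ Descend F 0 u := by intro u; simp [hB]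
  have hBne : B.Nonempty := ⟨w, (hmemB w).mpr hw⟩
  have h0B : (0 : Fin (m + 3)) ∉ B := by
    rw [hmemB]; exact not_not.mpr Relation.ReflTransGen.refl
  set M := B.max' hBne with hM
  have hMB : M ∈ B := B.max'_mem hBne
  set S : Finset (Fin (m + 3)) :=
    Finset.univ.filter (fun y => (Finset.Icc y M : Finset (Fin (m + 3))) ⊆ B) with hS
  have hmemS : ∀ y, y ∈ S ↔ (Finset.Icc y M : Finset (Fin (m + 3))) ⊆ B := by
    intro y; simp [hS, Finset.subset_iff]
  have hSne : S.Nonempty := by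
    refine ⟨M, (hmemS M).mpr ?_⟩
    intro z hz
    rw [Finset.Icc_self, Finset.mem_singleton] at hz
    rw [hz]; exact hMB
  set x := S.min' hSne with hx
  have hxS : (Finset.Icc x M : Finset (Fin (m + 3))) ⊆ B := (hmemS x).mp (S.min'_mem hSne)
  have hxM : x ≤ M := S.min'_le M ((hmemS M).mpr (by
    intro z hz
    rw [Finset.Icc_self, Finset.mem_singleton] at hz
    rw [hz]; exact hMB))
  have hx0 : x ≠ 0 := by
    intro h
    exact h0B (hxS (Finset.mem_Icc.mpr ⟨h ▸ le_refl x, h ▸ hxM⟩))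
  have hxv : x.val ≠ 0 := fun h => hx0 (Fin.ext h)
  -- the vertex just to the left of x
  set p : Fin (m + 3) := ⟨x.val - 1, by omega⟩ with hp
  have hpx : p < x := by
    rw [Fin.lt_def]; simp only [hp]; omega
  have hpB : p ∉ B := by
    intro hpB
    have hpS : p ∈ S := by
      rw [hmemS]
      intro z hz
      rw [Finset.mem_Icc] at hz
      by_cases hzp : z = p
      · rw [hzp]; exact hpB
      · have h1 : p.val < z.val := lt_of_le_of_ne (Fin.le_def.mp hz.1) (fun h => hzp (Fin.ext h.symm))
        have h2 : x ≤ z := by rw [Fin.le_def]; simp only [hp] at h1; omega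
        exact hxS (Finset.mem_Icc.mpr ⟨h2, hz.2⟩)
    exact absurd (S.min'_le p hpS) (not_le.mpr hpx)
  have hpD : Descend F 0 p := (hmemB p).not_left.mp hpB
  -- the cut [x, M] must be covered
  have hcut : IsCut (Finset.Icc x M) :=
    ⟨x, M, Fin.pos_of_ne_zero hx0, hxM, rfl⟩
  obtain ⟨e, he, hecov⟩ := hF.1 _ hcut
  obtain ⟨het, heh⟩ := hecov
  have hheadB : e.head ∈ B := hxS heh
  have hheadIcc := Finset.mem_Icc.mp heh
  have htailB : e.tail ∈ B := by
    rw [hmemB]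
    intro hreach
    exact (hmemB e.head).mp hheadB (hreach.tail ⟨e, he, rfl, rfl⟩)
  have htailM : e.tail ≤ M := B.le_max' e.tail htailB
  have htailx : e.tail < x := by
    rcases lt_or_ge e.tail x with h | h
    · exact h
    · exact absurd (Finset.mem_Icc.mpr ⟨h, htailM⟩) het
  have htail0 : e.tail ≠ 0 := fun h => h0B (h ▸ htailB)
  have htailp : e.tail ≠ p := fun h => hpB (h ▸ htailB)
  have htailpv : e.tail.val < p.val := by
    have h1 := Fin.lt_def.mp htailx
    have h2 : e.tail.val ≠ 0 := fun h => htail0 (Fin.ext h)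
    have h3 : e.tail.val ≠ p.val := fun h => htailp (Fin.ext h)
    simp only [hp] at *; omega
  have hph : p < e.head := lt_of_lt_of_le hpx hheadIcc.1
  -- shorten e to (p, e.head)
  set d' : DLink (m + 3) := ⟨p, e.head, ne_of_lt hph⟩ with hd'
  have hshort : IsShortening d' e := by
    refine ⟨rfl, ?_, ?_⟩
    · exact le_trans (min_le_left _ _) (le_of_lt (Fin.lt_def.mpr htailpv))
    · exact le_trans (le_of_lt hph) (le_max_right _ _)
  have hne : d' ≠ e := by
    intro h
    exact htailp (congrArg DLink.tail h).symm
  have hnot := hF.2.2 e he d' hshort hne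
  rw [IsDirSolution] at hnot
  push_neg at hnot
  obtain ⟨C, hC, hnone⟩ := hnot
  have heC : DCovers e C := by
    obtain ⟨g, hg, hgcov⟩ := hF.1 C hC
    by_cases hge : g = e
    · rw [← hge]; exact hgcov
    · exact absurd hgcov (hnone g (Finset.mem_insert_of_mem (Finset.mem_erase.mpr ⟨hge, hg⟩)))
  have hpC : p ∈ C := by
    by_contra hpC
    exact hnone d' (Finset.mem_insert_self _ _) ⟨hpC, heC.2⟩
  obtain ⟨f, hf, hft, hfh, hreach, _⟩ := enters_cut F hpD (zero_not_mem_cut hC) hpC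
  have hfe : f = e := by
    by_contra hfe
    exact hnone f (Finset.mem_insert_of_mem (Finset.mem_erase.mpr ⟨hfe, hf⟩)) ⟨hft, hfh⟩
  rw [hfe] at hreach
  exact (hmemB e.head).mp hheadB (hreach.tail ⟨e, he, rfl, rfl⟩)

/-- Every vertex on the span of a link, other than its tail, is a descendant
of its head. -/
private lemma span_descend (F : Finset (DLink (m + 3))) (hF : NonShortenable F)
    {d : DLink (m + 3)} (hd : d ∈ F) {s : Fin (m + 3)}
    (h1 : min d.tail d.head ≤ s) (h2 : s ≤ max d.tail d.head)
    (hst : s ≠ d.tail) (hsh : s ≠ d.head) : Descend F d.head s := by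
  classical
  set d' : DLink (m + 3) := ⟨s, d.head, hsh⟩ with hd'
  have hshort : IsShortening d' d := ⟨rfl, h1, h2⟩
  have hne : d' ≠ d := fun h => hst (congrArg DLink.tail h)
  have hnot := hF.2.2 d hd d' hshort hne
  rw [IsDirSolution] at hnot
  push_neg at hnot
  obtain ⟨C, hC, hnone⟩ := hnot
  have hdC : DCovers d C := by
    obtain ⟨g, hg, hgcov⟩ := hF.1 C hC
    by_cases hgd : g = d
    · rw [← hgd]; exact hgcov
    · exact absurd hgcov (hnone g (Finset.mem_insert_of_mem (Finset.mem_erase.mpr ⟨hgd, hg⟩)))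
  have hsC : s ∈ C := by
    by_contra hsC
    exact hnone d' (Finset.mem_insert_self _ _) ⟨hsC, hdC.2⟩
  obtain ⟨f, hf, hft, hfh, _, hdesc⟩ :=
    enters_cut F (reach_root F hF s) (zero_not_mem_cut hC) hsC
  have hfd : f = d := by
    by_contra hfd
    exact hnone f (Finset.mem_insert_of_mem (Finset.mem_erase.mpr ⟨hfd, hf⟩)) ⟨hft, hfh⟩
  rw [hfd] at hdesc
  exact hdesc

/-- Everything between `v` and a descendant of `v` is a descendant of `v`. -/
private lemma between_descend (F : Finset (DLink (m + 3))) (hF : NonShortenable F)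
    (v : Fin (m + 3)) :
    ∀ u, Descend F v u → ∀ x : Fin (m + 3), min v u ≤ x → x ≤ max v u →
      Descend F v x := by
  intro u hu
  induction hu with
  | refl =>
    intro x h1 h2
    simp only [min_self, max_self] at h1 h2
    have : x = v := le_antisymm h2 h1
    exact this ▸ Relation.ReflTransGen.refl
  | @tail w u hw hstep ih =>
    intro x h1 h2
    have key : (min v w ≤ x ∧ x ≤ max v w) ∨ (min w u ≤ x ∧ x ≤ max w u) := by
      rcases le_total x w with hxw | hwx
      · rcases min_le_iff.mp h1 with hvx | hux
        · exact Or.inl ⟨le_trans (min_le_left _ _) hvx, le_trans hxw (le_max_right _ _)⟩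
        · exact Or.inr ⟨le_trans (min_le_right _ _) hux, le_trans hxw (le_max_left _ _)⟩
      · rcases le_max_iff.mp h2 with hxv | hxu
        · exact Or.inl ⟨le_trans (min_le_right _ _) hwx, le_trans hxv (le_max_left _ _)⟩
        · exact Or.inr ⟨le_trans (min_le_left _ _) hwx, le_trans hxu (le_max_right _ _)⟩
    rcases key with ⟨a1, a2⟩ | ⟨b1, b2⟩
    · exact ih x a1 a2
    · by_cases hxw : x = w
      · rw [hxw]; exact hw
      · by_cases hxu : x = u
        · rw [hxu]; exact hw.tail hstep
        · obtain ⟨d, hd, hdt, hdh⟩ := hstep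
          subst hdt; subst hdh
          have hspan := span_descend F hF hd b1 b2 hxw hxu
          exact Relation.ReflTransGen.trans (hw.tail ⟨d, hd, rfl, rfl⟩) hspan

end AuxProofs

/-- for a non-shortenable directed WRAP solution `F`, the set
of descendants of any vertex `v` in the arborescence `(V, F)` is an interval
of consecutive vertices along the path `(V, E \ {e_r})`. -/
theorem descendants_form_interval {n : ℕ}
    (L : Finset (Link (n + 3))) (c : Link (n + 3) → ℝ)
    (F : Finset (DLink (n + 3))) (hF : NonShortenable F) (v : Fin (n + 3)) :
    ∃ a b : Fin (n + 3), {u : Fin (n + 3) | Descend F v u} = Set.Icc a b := by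
  classical
  have hvD : v ∈ {u : Fin (n + 3) | Descend F v u} := Relation.ReflTransGen.refl
  set D : Set (Fin (n + 3)) := {u : Fin (n + 3) | Descend F v u} with hD
  have hfin : D.Finite := Set.toFinite D
  set S := hfin.toFinset with hS
  have hmemS : ∀ u, u ∈ S ↔ Descend F v u := by
    intro u; rw [hS, Set.Finite.mem_toFinset]; rfl
  have hSne : S.Nonempty := ⟨v, (hmemS v).mpr Relation.ReflTransGen.refl⟩
  refine ⟨S.min' hSne, S.max' hSne, ?_⟩
  apply Set.eq_of_subset_of_subset
  · intro u hu
    have huS : u ∈ S := (hmemS u).mpr hu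
    exact Set.mem_Icc.mpr ⟨S.min'_le u huS, S.le_max' u huS⟩
  · intro x hx
    rw [Set.mem_Icc] at hx
    have haD : Descend F v (S.min' hSne) := (hmemS _).mp (S.min'_mem hSne)
    have hbD : Descend F v (S.max' hSne) := (hmemS _).mp (S.max'_mem hSne)
    have hav : S.min' hSne ≤ v := S.min'_le v ((hmemS v).mpr Relation.ReflTransGen.refl)
    have hvb : v ≤ S.max' hSne := S.le_max' v ((hmemS v).mpr Relation.ReflTransGen.refl)
    rcases le_total x v with h | h
    · exact between_descend F hF v _ haD x
        (le_trans (min_le_right _ _) hx.1) (le_trans h (le_max_left _ _))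
    · exact between_descend F hF v _ hbD x
        (le_trans (min_le_left _ _) h) (le_trans hx.2 (le_max_right _ _))
end

section
/- Let (G, L, c, r, e_r) be a rooted WRAP instance and F⃗ a non-shortenable directed WRAP solution. Then for any v_1, v_2 ∈ V, the least common ancestor of v_1 and v_2 in the arborescence (V, F⃗) lies between v_1 and v_2, i.e., it lies on the unique v_1–v_2 path in (V, E \ {e_r}) (possibly equal to v_1 or v_2). -/
variable {n : ℕ}

section AuxWrap

variable {N : ℕ} [NeZero N] {F : Finset (DLink N)}

lemma wrap_exists_private (hF : NonShortenable F) {d : DLink N} (hd : d ∈ F) :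
    ∃ C, IsCut C ∧ DCovers d C ∧ ∀ f ∈ F, f ≠ d → ¬ DCovers f C := by
  obtain ⟨hSol, hDel, -⟩ := hF
  have h := hDel d hd
  simp only [IsDirSolution, not_forall] at h
  obtain ⟨C, hcut, hno⟩ := h
  push_neg at hno
  obtain ⟨f, hf, hcov⟩ := hSol C hcut
  have hfd : f = d := by
    by_contra hne
    exact hno f (Finset.mem_erase.mpr ⟨hne, hf⟩) hcov
  subst hfd
  exact ⟨C, hcut, hcov, fun g hg hgd => hno g (Finset.mem_erase.mpr ⟨hgd, hg⟩)⟩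

lemma wrap_exists_private_short (hF : NonShortenable F) {d d' : DLink N} (hd : d ∈ F)
    (hs : IsShortening d' d) (hne : d' ≠ d) :
    ∃ C, IsCut C ∧ DCovers d C ∧ ¬ DCovers d' C ∧ ∀ f ∈ F, f ≠ d → ¬ DCovers f C := by
  obtain ⟨hSol, -, hShort⟩ := hF
  have h := hShort d hd d' hs hne
  simp only [IsDirSolution, not_forall] at h
  obtain ⟨C, hcut, hno⟩ := h
  push_neg at hno
  obtain ⟨f, hf, hcov⟩ := hSol C hcut
  have hfd : f = d := by
    by_contra hne'
    exact hno f (Finset.mem_insert_of_mem (Finset.mem_erase.mpr ⟨hne', hf⟩)) hcov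
  subst hfd
  exact ⟨C, hcut, hcov, hno d' (Finset.mem_insert_self _ _),
    fun g hg hgd => hno g (Finset.mem_insert_of_mem (Finset.mem_erase.mpr ⟨hgd, hg⟩))⟩

/-- Private cut lemma for right-going links: there is a cut `[tail+1, b]` with
`b ≥ head` covered only by `d`. -/
lemma wrap_P_right (hF : NonShortenable F) {d : DLink N} (hd : d ∈ F)
    (hlt : d.tail < d.head) :
    ∃ a b : Fin N, 0 < a ∧ d.tail < a ∧ (∀ p : Fin N, d.tail < p → a ≤ p) ∧
      d.head ≤ b ∧ DCovers d (Finset.Icc a b) ∧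
      ∀ f ∈ F, f ≠ d → ¬ DCovers f (Finset.Icc a b) := by
  have hvlt : d.tail.val + 1 ≤ d.head.val := hlt
  have htsN : d.tail.val + 1 < N := lt_of_le_of_lt hvlt d.head.isLt
  have main : ∃ C, IsCut C ∧ DCovers d C ∧ (⟨d.tail.val + 1, htsN⟩ : Fin N) ∈ C ∧
      ∀ f ∈ F, f ≠ d → ¬ DCovers f C := by
    by_cases hcase : (⟨d.tail.val + 1, htsN⟩ : Fin N) = d.head
    · obtain ⟨C, hcut, hcov, honly⟩ := wrap_exists_private hF hd
      exact ⟨C, hcut, hcov, hcase ▸ hcov.2, honly⟩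
    · have hshort : IsShortening ⟨⟨d.tail.val + 1, htsN⟩, d.head, hcase⟩ d := by
        refine ⟨rfl, ?_, ?_⟩
        · rw [min_eq_left hlt.le]; exact Fin.le_def.mpr (Nat.le_succ _)
        · rw [max_eq_right hlt.le]; exact Fin.le_def.mpr hvlt
      have hne' : (⟨⟨d.tail.val + 1, htsN⟩, d.head, hcase⟩ : DLink N) ≠ d := by
        intro h
        have hv : d.tail.val + 1 = d.tail.val := congrArg (fun x => x.tail.val) h
        omega
      obtain ⟨C, hcut, hcov, hnc, honly⟩ := wrap_exists_private_short hF hd hshort hne'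
      refine ⟨C, hcut, hcov, ?_, honly⟩
      by_contra hts_nc
      exact hnc ⟨hts_nc, hcov.2⟩
  obtain ⟨C, ⟨a, b, ha0, hab, rfl⟩, hcov, htsC, honly⟩ := main
  rw [Finset.mem_Icc] at htsC
  have hhead := hcov.2
  rw [Finset.mem_Icc] at hhead
  have htail := hcov.1
  rw [Finset.mem_Icc] at htail
  push_neg at htail
  have hta : d.tail < a := by
    by_contra hcon
    push_neg at hcon
    exact absurd (htail hcon) (not_lt.mpr (le_trans hlt.le hhead.2))
  refine ⟨a, b, ha0, hta, ?_, hhead.2, hcov, honly⟩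
  intro p hp
  have h1 : a.val ≤ d.tail.val + 1 := htsC.1
  have h2 : d.tail.val < p.val := hp
  exact Fin.le_def.mpr (by omega)

/-- Private cut lemma for left-going links: there is a cut `[a, tail-1]` with
`a ≤ head` covered only by `d`. -/
lemma wrap_P_left (hF : NonShortenable F) {d : DLink N} (hd : d ∈ F)
    (hlt : d.head < d.tail) :
    ∃ a b : Fin N, 0 < a ∧ a ≤ d.head ∧ b < d.tail ∧ (∀ p : Fin N, p < d.tail → p ≤ b) ∧
      DCovers d (Finset.Icc a b) ∧
      ∀ f ∈ F, f ≠ d → ¬ DCovers f (Finset.Icc a b) := by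
  have hvlt : d.head.val < d.tail.val := hlt
  have htsN : d.tail.val - 1 < N := lt_of_le_of_lt (Nat.sub_le _ _) d.tail.isLt
  have main : ∃ C, IsCut C ∧ DCovers d C ∧ (⟨d.tail.val - 1, htsN⟩ : Fin N) ∈ C ∧
      ∀ f ∈ F, f ≠ d → ¬ DCovers f C := by
    by_cases hcase : (⟨d.tail.val - 1, htsN⟩ : Fin N) = d.head
    · obtain ⟨C, hcut, hcov, honly⟩ := wrap_exists_private hF hd
      exact ⟨C, hcut, hcov, hcase ▸ hcov.2, honly⟩
    · have hshort : IsShortening ⟨⟨d.tail.val - 1, htsN⟩, d.head, hcase⟩ d := by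
        refine ⟨rfl, ?_, ?_⟩
        · rw [min_eq_right hlt.le]
          have hne2 : d.head.val ≠ d.tail.val - 1 := fun h => hcase (Fin.ext h.symm)
          exact Fin.le_def.mpr (show d.head.val ≤ d.tail.val - 1 by omega)
        · rw [max_eq_left hlt.le]
          exact Fin.le_def.mpr (show d.tail.val - 1 ≤ d.tail.val by omega)
      have hne' : (⟨⟨d.tail.val - 1, htsN⟩, d.head, hcase⟩ : DLink N) ≠ d := by
        intro h
        have hv : d.tail.val - 1 = d.tail.val := congrArg (fun x => x.tail.val) h
        omega
      obtain ⟨C, hcut, hcov, hnc, honly⟩ := wrap_exists_private_short hF hd hshort hne'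
      refine ⟨C, hcut, hcov, ?_, honly⟩
      by_contra hts_nc
      exact hnc ⟨hts_nc, hcov.2⟩
  obtain ⟨C, ⟨a, b, ha0, hab, rfl⟩, hcov, htsC, honly⟩ := main
  rw [Finset.mem_Icc] at htsC
  have hhead := hcov.2
  rw [Finset.mem_Icc] at hhead
  have htail := hcov.1
  rw [Finset.mem_Icc] at htail
  push_neg at htail
  have hbt : b < d.tail := htail (le_trans hhead.1 hlt.le)
  refine ⟨a, b, ha0, hhead.1, hbt, ?_, hcov, honly⟩
  intro p hp
  have h1 : d.tail.val - 1 ≤ b.val := htsC.2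
  have h2 : p.val < d.tail.val := hp
  exact Fin.le_def.mpr (by omega)

/-- No two distinct links of `F` share a head. -/
lemma wrap_head_inj (hF : NonShortenable F) {d1 d2 : DLink N} (h1 : d1 ∈ F) (h2 : d2 ∈ F)
    (hh : d1.head = d2.head) : d1 = d2 := by
  by_contra hne
  obtain ⟨C1, hc1, hcov1, ho1⟩ := wrap_exists_private hF h1
  obtain ⟨C2, hc2, hcov2, ho2⟩ := wrap_exists_private hF h2
  obtain ⟨a1, b1, ha1, hab1, rfl⟩ := hc1
  obtain ⟨a2, b2, ha2, hab2, rfl⟩ := hc2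
  have hv1 := hcov1.2
  have hv2 := hcov2.2
  rw [Finset.mem_Icc] at hv1 hv2
  rw [hh] at hv1
  -- both intervals contain v := d2.head
  have hWcut : IsCut (Finset.Icc (min a1 a2) (max b1 b2)) :=
    ⟨min a1 a2, max b1 b2, lt_min ha1 ha2,
      le_trans (min_le_right _ _) (le_trans hv2.1 (le_trans hv2.2 (le_max_right _ _))), rfl⟩
  obtain ⟨f, hf, hft, hfh⟩ := hF.1 _ hWcut
  rw [Finset.mem_Icc] at hfh
  have hsub1 : Finset.Icc a1 b1 ⊆ Finset.Icc (min a1 a2) (max b1 b2) :=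
    Finset.Icc_subset_Icc (min_le_left _ _) (le_max_left _ _)
  have hsub2 : Finset.Icc a2 b2 ⊆ Finset.Icc (min a1 a2) (max b1 b2) :=
    Finset.Icc_subset_Icc (min_le_right _ _) (le_max_right _ _)
  have hcases : f.head ∈ Finset.Icc a1 b1 ∨ f.head ∈ Finset.Icc a2 b2 := by
    simp only [Finset.mem_Icc]
    have q1 := hv1.1; have q2 := hv1.2; have q3 := hv2.1; have q4 := hv2.2
    have p1 : a1 ≤ f.head ∨ a2 ≤ f.head := min_le_iff.mp hfh.1
    have p2 : f.head ≤ b1 ∨ f.head ≤ b2 := le_max_iff.mp hfh.2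
    simp only [Fin.le_def] at q1 q2 q3 q4 p1 p2 ⊢
    omega
  rcases hcases with hmem | hmem
  · have hcf : DCovers f (Finset.Icc a1 b1) := ⟨fun hm => hft (hsub1 hm), hmem⟩
    have hfd : f = d1 := by
      by_contra hne'
      exact ho1 f hf hne' hcf
    subst hfd
    have : ¬ DCovers f (Finset.Icc a2 b2) := ho2 f hf hne
    have htl : f.tail ∈ Finset.Icc a2 b2 := by
      by_contra hcon
      exact this ⟨hcon, by rw [Finset.mem_Icc, hh]; exact hv2⟩
    exact hft (hsub2 htl)
  · have hcf : DCovers f (Finset.Icc a2 b2) := ⟨fun hm => hft (hsub2 hm), hmem⟩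
    have hfd : f = d2 := by
      by_contra hne'
      exact ho2 f hf hne' hcf
    subst hfd
    have : ¬ DCovers f (Finset.Icc a1 b1) := ho1 f hf (fun h => hne h.symm)
    have htl : f.tail ∈ Finset.Icc a1 b1 := by
      by_contra hcon
      exact this ⟨hcon, Finset.mem_Icc.mpr hv1⟩
    exact hft (hsub1 htl)

lemma wrap_head_ne_zero (hF : NonShortenable F) {d : DLink N} (hd : d ∈ F) :
    d.head ≠ 0 := by
  obtain ⟨C, ⟨a, b, ha0, hab, rfl⟩, hcov, -⟩ := wrap_exists_private hF hd
  have := hcov.2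
  rw [Finset.mem_Icc] at this
  intro h0
  rw [h0] at this
  exact absurd (lt_of_lt_of_le ha0 this.1) (lt_irrefl _)

lemma wrap_exists_in (hF : NonShortenable F) (v : Fin N) (hv : v ≠ 0) :
    ∃ d ∈ F, d.head = v := by
  have hcut : IsCut (Finset.Icc v v) := ⟨v, v, (Fin.pos_iff_ne_zero' v).mpr hv, le_refl _, rfl⟩
  obtain ⟨f, hf, -, hfh⟩ := hF.1 _ hcut
  rw [Finset.mem_Icc] at hfh
  exact ⟨f, hf, le_antisymm hfh.2 hfh.1⟩

end AuxWrap
section AuxWrap2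

variable {N : ℕ} [NeZero N] {F : Finset (DLink N)}

/-- Statement 1, left version: all descendants of the head of a left-going
link lie strictly to the left of its tail. -/
lemma wrap_S1_left (hF : NonShortenable F) {d : DLink N} (hd : d ∈ F)
    (hlt : d.head < d.tail) : ∀ x, Descend F d.head x → x < d.tail := by
  obtain ⟨a0, b0, ha0, hav, hb0u, hpred, hcov0, honly0⟩ := wrap_P_left hF hd hlt
  suffices H : ∀ x, Descend F d.head x → ∃ α : Fin N, 0 < α ∧ α ≤ x ∧ x ≤ b0 ∧
      ∀ f ∈ F, DCovers f (Finset.Icc α b0) → f.tail = d.tail by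
    intro x hx
    obtain ⟨α, -, -, hxb, -⟩ := H x hx
    exact lt_of_le_of_lt hxb hb0u
  intro x hx
  induction hx with
  | refl =>
      refine ⟨a0, ha0, hav, hpred _ hlt, ?_⟩
      intro f hf hc
      by_cases hfd : f = d
      · rw [hfd]
      · exact absurd hc (honly0 f hf hfd)
  | @tail y x hdy hyx ih =>
      obtain ⟨α, hα0, hαy, hyb, hInv⟩ := ih
      obtain ⟨g, hg, hgt, hgh⟩ := hyx
      by_cases hxu : x < d.tail
      · by_cases hax : α ≤ x
        · exact ⟨α, hα0, hax, hpred _ hxu, hInv⟩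
        · push_neg at hax
          have hxy : x < y := lt_of_lt_of_le hax hαy
          have hgr : g.head < g.tail := by rw [hgt, hgh]; exact hxy
          obtain ⟨a2, b2, ha20, ha2x, hb2y, hpred2, hcov2, honly2⟩ := wrap_P_left hF hg hgr
          rw [hgh] at ha2x
          rw [hgt] at hb2y hpred2
          refine ⟨a2, ha20, ha2x, hpred _ hxu, ?_⟩
          intro f hf hc
          obtain ⟨hft, hfh⟩ := hc
          rw [Finset.mem_Icc] at hfh
          by_cases hfα : α ≤ f.head
          · have : DCovers f (Finset.Icc α b0) := by
              refine ⟨fun hmem => hft ?_, Finset.mem_Icc.mpr ⟨hfα, hfh.2⟩⟩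
              exact Finset.Icc_subset_Icc (le_of_lt (lt_of_le_of_lt ha2x hax)) le_rfl hmem
            exact hInv f hf this
          · push_neg at hfα
            have hhy : f.head < y := lt_of_lt_of_le hfα hαy
            have hfC2 : DCovers f (Finset.Icc a2 b2) := by
              refine ⟨fun hmem => hft ?_, Finset.mem_Icc.mpr ⟨hfh.1, hpred2 _ hhy⟩⟩
              exact Finset.Icc_subset_Icc le_rfl (le_trans hb2y.le hyb) hmem
            have hfg : f = g := by
              by_contra hne
              exact absurd hfC2 (honly2 f hf hne)
            exfalso
            apply hft
            rw [hfg, hgt]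
            exact Finset.mem_Icc.mpr ⟨ha2x.trans (hax.le.trans hαy), hyb⟩
      · push_neg at hxu
        exfalso
        have hyx' : y < x := lt_of_le_of_lt hyb (lt_of_lt_of_le hb0u hxu)
        have hgr : g.tail < g.head := by rw [hgt, hgh]; exact hyx'
        obtain ⟨a2, b2, ha20, hya2, hsucc2, hxb2, hcov2, honly2⟩ := wrap_P_right hF hg hgr
        rw [hgt] at hya2 hsucc2
        rw [hgh] at hxb2
        have hαb2 : α ≤ b2 := le_trans hαy (le_trans hyb (le_trans hb0u.le (le_trans hxu hxb2)))
        have hWcut : IsCut (Finset.Icc α b2) := ⟨α, b2, hα0, hαb2, rfl⟩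
        obtain ⟨f, hf, hft, hfh⟩ := hF.1 _ hWcut
        rw [Finset.mem_Icc] at hfh
        by_cases hfb0 : f.head ≤ b0
        · have hcv : DCovers f (Finset.Icc α b0) := by
            refine ⟨fun hmem => hft (Finset.Icc_subset_Icc le_rfl ?_ hmem),
              Finset.mem_Icc.mpr ⟨hfh.1, hfb0⟩⟩
            exact le_trans hb0u.le (le_trans hxu hxb2)
          have htl := hInv f hf hcv
          apply hft
          rw [htl]
          exact Finset.mem_Icc.mpr ⟨le_trans hαy (le_trans hyb hb0u.le), le_trans hxu hxb2⟩
        · push_neg at hfb0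
          have hufh : d.tail ≤ f.head := by
            by_contra hcon
            push_neg at hcon
            exact absurd (hpred _ hcon) (not_le.mpr hfb0)
          have hyfh : y < f.head := lt_of_le_of_lt hyb (lt_of_lt_of_le hb0u hufh)
          have hfC2 : DCovers f (Finset.Icc a2 b2) := by
            refine ⟨fun hmem => hft
              (Finset.Icc_subset_Icc (lt_of_le_of_lt hαy hya2).le le_rfl hmem),
              Finset.mem_Icc.mpr ⟨hsucc2 _ hyfh, hfh.2⟩⟩
          have hfg : f = g := by
            by_contra hne
            exact absurd hfC2 (honly2 f hf hne)
          apply hft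
          rw [hfg, hgt]
          exact Finset.mem_Icc.mpr ⟨hαy, le_trans hyb (le_trans hb0u.le (le_trans hxu hxb2))⟩

/-- Statement 1, right version: all descendants of the head of a right-going
link lie strictly to the right of its tail. -/
lemma wrap_S1_right (hF : NonShortenable F) {d : DLink N} (hd : d ∈ F)
    (hlt : d.tail < d.head) : ∀ x, Descend F d.head x → d.tail < x := by
  obtain ⟨a0, b0, ha00, hua0, hsucc, hvb0, hcov0, honly0⟩ := wrap_P_right hF hd hlt
  suffices H : ∀ x, Descend F d.head x → ∃ β : Fin N, a0 ≤ x ∧ x ≤ β ∧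
      ∀ f ∈ F, DCovers f (Finset.Icc a0 β) → f.tail = d.tail by
    intro x hx
    obtain ⟨β, hax, -, -⟩ := H x hx
    exact lt_of_lt_of_le hua0 hax
  intro x hx
  induction hx with
  | refl =>
      refine ⟨b0, hsucc _ hlt, hvb0, ?_⟩
      intro f hf hc
      by_cases hfd : f = d
      · rw [hfd]
      · exact absurd hc (honly0 f hf hfd)
  | @tail y x hdy hyx ih =>
      obtain ⟨β, hαy, hyβ, hInv⟩ := ih
      obtain ⟨g, hg, hgt, hgh⟩ := hyx
      by_cases hxu : d.tail < x
      · by_cases hxβ : x ≤ β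
        · exact ⟨β, hsucc _ hxu, hxβ, hInv⟩
        · push_neg at hxβ
          have hyx' : y < x := lt_of_le_of_lt hyβ hxβ
          have hgr : g.tail < g.head := by rw [hgt, hgh]; exact hyx'
          obtain ⟨a2, b2, ha20, hya2, hsucc2, hxb2, hcov2, honly2⟩ := wrap_P_right hF hg hgr
          rw [hgt] at hya2 hsucc2
          rw [hgh] at hxb2
          refine ⟨b2, hsucc _ hxu, hxb2, ?_⟩
          intro f hf hc
          obtain ⟨hft, hfh⟩ := hc
          rw [Finset.mem_Icc] at hfh
          by_cases hfβ : f.head ≤ β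
          · have : DCovers f (Finset.Icc a0 β) := by
              refine ⟨fun hmem => hft ?_, Finset.mem_Icc.mpr ⟨hfh.1, hfβ⟩⟩
              exact Finset.Icc_subset_Icc le_rfl (le_trans hxβ.le hxb2) hmem
            exact hInv f hf this
          · push_neg at hfβ
            have hyfh : y < f.head := lt_of_le_of_lt hyβ hfβ
            have hfC2 : DCovers f (Finset.Icc a2 b2) := by
              refine ⟨fun hmem => hft ?_, Finset.mem_Icc.mpr ⟨hsucc2 _ hyfh, hfh.2⟩⟩
              exact Finset.Icc_subset_Icc (le_trans hαy hya2.le) le_rfl hmem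
            have hfg : f = g := by
              by_contra hne
              exact absurd hfC2 (honly2 f hf hne)
            exfalso
            apply hft
            rw [hfg, hgt]
            exact Finset.mem_Icc.mpr ⟨hαy, le_trans hyβ (le_trans hxβ.le hxb2)⟩
      · push_neg at hxu
        exfalso
        have hxy : x < y := lt_of_le_of_lt hxu (lt_of_lt_of_le hua0 hαy)
        have hgr : g.head < g.tail := by rw [hgt, hgh]; exact hxy
        obtain ⟨a2, b2, ha20, ha2x, hb2y, hpred2, hcov2, honly2⟩ := wrap_P_left hF hg hgr
        rw [hgh] at ha2x
        rw [hgt] at hb2y hpred2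
        have ha2β : a2 ≤ β := le_trans ha2x (le_trans hxu (le_trans hua0.le (le_trans hαy hyβ)))
        have hWcut : IsCut (Finset.Icc a2 β) := ⟨a2, β, ha20, ha2β, rfl⟩
        obtain ⟨f, hf, hft, hfh⟩ := hF.1 _ hWcut
        rw [Finset.mem_Icc] at hfh
        by_cases hfa0 : a0 ≤ f.head
        · have hcv : DCovers f (Finset.Icc a0 β) := by
            refine ⟨fun hmem => hft (Finset.Icc_subset_Icc ?_ le_rfl hmem),
              Finset.mem_Icc.mpr ⟨hfa0, hfh.2⟩⟩
            exact le_trans ha2x (le_trans hxu hua0.le)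
          have htl := hInv f hf hcv
          apply hft
          rw [htl]
          exact Finset.mem_Icc.mpr ⟨le_trans ha2x hxu, le_trans hua0.le (le_trans hαy hyβ)⟩
        · push_neg at hfa0
          have hfhu : f.head ≤ d.tail := by
            by_contra hcon
            push_neg at hcon
            exact absurd (hsucc _ hcon) (not_le.mpr hfa0)
          have hfhy : f.head < y := lt_of_le_of_lt hfhu (lt_of_lt_of_le hua0 hαy)
          have hfC2 : DCovers f (Finset.Icc a2 b2) := by
            refine ⟨fun hmem => hft
              (Finset.Icc_subset_Icc le_rfl (le_trans hb2y.le hyβ) hmem),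
              Finset.mem_Icc.mpr ⟨hfh.1, hpred2 _ hfhy⟩⟩
          have hfg : f = g := by
            by_contra hne
            exact absurd hfC2 (honly2 f hf hne)
          apply hft
          rw [hfg, hgt]
          exact Finset.mem_Icc.mpr ⟨le_trans ha2x hxy.le, hyβ⟩

end AuxWrap2

/-- for a non-shortenable directed WRAP solution `F`, the
least common ancestor of any two vertices `v₁, v₂` in the arborescence
`(V, F)` lies between `v₁` and `v₂`, i.e. on the unique `v₁`–`v₂` path in
`(V, E \ {e_r})` (possibly equal to `v₁` or `v₂`). -/
theorem lca_lies_between {n : ℕ}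
    (L : Finset (Link (n + 3))) (c : Link (n + 3) → ℝ)
    (F : Finset (DLink (n + 3))) (hF : NonShortenable F)
    (v₁ v₂ : Fin (n + 3)) :
    ∃ w : Fin (n + 3), IsLCA F w {v₁, v₂} ∧ min v₁ v₂ ≤ w ∧ w ≤ max v₁ v₂ := by
  classical
  -- the parent function of the arborescence
  have hex : ∀ v : Fin (n + 3), ∃ p : Fin (n + 3), (v = 0 → p = 0) ∧
      (v ≠ 0 → ∃ d ∈ F, d.head = v ∧ d.tail = p) := by
    intro v
    by_cases hv : v = 0
    · exact ⟨0, fun _ => rfl, fun h => absurd hv h⟩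
    · obtain ⟨dv, hdv, hdvh⟩ := wrap_exists_in hF v hv
      exact ⟨dv.tail, fun h => absurd h hv, fun _ => ⟨dv, hdv, hdvh, rfl⟩⟩
  choose pa hpa0 hpaArc using hex
  have hpz : pa 0 = 0 := hpa0 0 rfl
  -- single steps determine the parent
  have hstep : ∀ {y x : Fin (n + 3)}, (∃ g ∈ F, g.tail = y ∧ g.head = x) →
      x ≠ 0 ∧ pa x = y := by
    rintro y x ⟨g, hg, hgt, hgh⟩
    have hx0 : x ≠ 0 := hgh ▸ wrap_head_ne_zero hF hg
    obtain ⟨e, he, heh, het⟩ := hpaArc x hx0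
    have hge : g = e := wrap_head_inj hF hg he (by rw [hgh, heh])
    exact ⟨hx0, by rw [← het, ← hge, hgt]⟩
  -- iterates of the parent are ancestors
  have hdesc_iter : ∀ (v : Fin (n + 3)) (k : ℕ), Descend F (pa^[k] v) v := by
    intro v k
    induction k with
    | zero => exact Relation.ReflTransGen.refl
    | succ k ih =>
      rw [Function.iterate_succ_apply']
      by_cases h0 : pa^[k] v = 0
      · rw [h0, hpz, ← h0]; exact ih
      · obtain ⟨e, he, heh, het⟩ := hpaArc _ h0
        exact Relation.ReflTransGen.head ⟨e, he, het, heh⟩ ih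
  -- characterization of ancestry
  have hdesc_iff : ∀ x v : Fin (n + 3), Descend F x v ↔ ∃ k, pa^[k] v = x := by
    intro x v
    constructor
    · intro h
      induction h with
      | refl => exact ⟨0, rfl⟩
      | @tail b v' hxb hbv ih =>
        obtain ⟨k, hk⟩ := ih
        obtain ⟨hb0, hpab⟩ := hstep hbv
        exact ⟨k + 1, by rw [Function.iterate_succ_apply, hpab, hk]⟩
    · rintro ⟨k, hk⟩
      exact hk ▸ hdesc_iter v k
  -- the arborescence is acyclic: every vertex reaches the root
  have hreach : ∀ v : Fin (n + 3), ∃ k, pa^[k] v = 0 := by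
    intro v
    by_contra hcon
    push_neg at hcon
    have key : ∀ i j : ℕ, i < j → pa^[i] v = pa^[j] v → False := by
      intro i j hij heq
      set z := pa^[i] v with hz_def
      set l := j - i with hl_def
      have hl : 0 < l := by omega
      have hz : pa^[l] z = z := by
        rw [hz_def, ← Function.iterate_add_apply]
        rw [show l + i = j by omega]
        exact heq.symm
      have hper : ∀ k, pa^[k + l] z = pa^[k] z := by
        intro k
        rw [Function.iterate_add_apply, hz]
      have hnz : ∀ k, pa^[k] z ≠ 0 := by
        intro k
        rw [hz_def, ← Function.iterate_add_apply]
        exact hcon (k + i)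
      set S := (Finset.range l).image (fun k => pa^[k] z) with hS_def
      have hSne : S.Nonempty := ⟨z, Finset.mem_image.mpr ⟨0, Finset.mem_range.mpr hl, rfl⟩⟩
      have hmem : ∀ k, pa^[k] z ∈ S := by
        intro k
        induction k using Nat.strong_induction_on with
        | _ k ih =>
          by_cases hk : k < l
          · exact Finset.mem_image.mpr ⟨k, Finset.mem_range.mpr hk, rfl⟩
          · have h1 : pa^[k] z = pa^[k - l] z := by
              conv_lhs => rw [show k = (k - l) + l by omega]
              exact hper (k - l)
            rw [h1]
            exact ih (k - l) (by omega)
      set m := S.min' hSne with hm_def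
      obtain ⟨km, -, hkm⟩ := Finset.mem_image.mp (S.min'_mem hSne)
      have hm0 : m ≠ 0 := by rw [hm_def, ← hkm]; exact hnz km
      obtain ⟨e, he, heh, het⟩ := hpaArc m hm0
      have hu_eq : pa m = pa^[km + 1] z := by
        rw [Function.iterate_succ_apply', hkm]
      have hu_mem : pa m ∈ S := hu_eq ▸ hmem (km + 1)
      have hmu : m ≤ pa m := S.min'_le _ hu_mem
      have hne_mu : m ≠ pa m := by
        intro h
        exact e.ne (by rw [het, ← h, heh])
      have hlt_mu : m < pa m := lt_of_le_of_ne hmu hne_mu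
      have hm_anc : pa^[l - 1] (pa m) = m := by
        rw [hu_eq, ← Function.iterate_add_apply]
        rw [show l - 1 + (km + 1) = km + l by omega]
        rw [hper, hkm]
      have hdesc : Descend F m (pa m) := by
        have h := hdesc_iter (pa m) (l - 1)
        rw [hm_anc] at h
        exact h
      have hlt' : e.head < e.tail := by rw [heh, het]; exact hlt_mu
      have := wrap_S1_left hF he hlt' (pa m) (by rw [heh]; exact hdesc)
      rw [het] at this
      exact lt_irrefl _ this
    obtain ⟨i, j, hij, heq⟩ := Finite.exists_ne_map_eq_of_infinite (fun k : ℕ => pa^[k] v)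
    rcases hij.lt_or_gt with h | h
    · exact key i j h heq
    · exact key j i h heq.symm
  -- construct the least common ancestor
  obtain ⟨k1, hk1⟩ := hreach v₁
  obtain ⟨k2, hk2⟩ := hreach v₂
  have hA : ∃ k, ∃ j, pa^[j] v₂ = pa^[k] v₁ := ⟨k1, k2, by rw [hk1, hk2]⟩
  set ks := Nat.find hA with hks_def
  set w := pa^[ks] v₁ with hw_def
  have hJ : ∃ j, pa^[j] v₂ = w := Nat.find_spec hA
  set js := Nat.find hJ with hjs_def
  have hjs_spec : pa^[js] v₂ = w := Nat.find_spec hJ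
  have hks_min : ∀ i, i < ks → ¬∃ j, pa^[j] v₂ = pa^[i] v₁ := fun i hi => Nat.find_min hA hi
  have hks_le : ∀ i, (∃ j, pa^[j] v₂ = pa^[i] v₁) → ks ≤ i := fun i h => Nat.find_min' hA h
  have hjs_min : ∀ i, i < js → pa^[i] v₂ ≠ w := fun i hi => Nat.find_min hJ hi
  clear_value ks js
  clear_value w
  have hlca : IsLCA F w {v₁, v₂} := by
    constructor
    · intro u hu
      rcases hu with h | h
      · rw [h, hw_def]; exact hdesc_iter v₁ ks
      · rw [Set.mem_singleton_iff] at h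
        rw [h, ← hjs_spec]; exact hdesc_iter v₂ js
    · intro x hx
      have hx1 := hx v₁ (Set.mem_insert _ _)
      have hx2 := hx v₂ (Set.mem_insert_of_mem _ rfl)
      obtain ⟨i, hi⟩ := (hdesc_iff x v₁).mp hx1
      obtain ⟨j, hj⟩ := (hdesc_iff x v₂).mp hx2
      have hki : ks ≤ i := hks_le i ⟨j, by rw [hj, hi]⟩
      refine (hdesc_iff x w).mpr ⟨i - ks, ?_⟩
      rw [hw_def, ← Function.iterate_add_apply, show i - ks + ks = i by omega, hi]
  -- betweenness
  have hbetween : ∀ hside : (w < min v₁ v₂ ∨ max v₁ v₂ < w), False := by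
    intro hside
    have hwv1 : w ≠ v₁ := by
      rcases hside with h | h
      · exact ne_of_lt (lt_of_lt_of_le h (min_le_left _ _))
      · exact (ne_of_lt (lt_of_le_of_lt (le_max_left v₁ v₂) h)).symm
    have hwv2 : w ≠ v₂ := by
      rcases hside with h | h
      · exact ne_of_lt (lt_of_lt_of_le h (min_le_right _ _))
      · exact (ne_of_lt (lt_of_le_of_lt (le_max_right v₁ v₂) h)).symm
    have hks1 : 1 ≤ ks := by
      rcases Nat.eq_zero_or_pos ks with h | h
      · subst h; exact absurd (by rw [hw_def, Function.iterate_zero_apply]) hwv1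
      · exact h
    have hjs1 : 1 ≤ js := by
      rcases Nat.eq_zero_or_pos js with h | h
      · subst h; exact absurd (by rw [← hjs_spec, Function.iterate_zero_apply]) hwv2
      · exact h
    obtain ⟨ks', rfl⟩ : ∃ t, ks = t + 1 := ⟨ks - 1, by omega⟩
    obtain ⟨js', rfl⟩ : ∃ t, js = t + 1 := ⟨js - 1, by omega⟩
    set c₁ := pa^[ks'] v₁ with hc1_def
    set c₂ := pa^[js'] v₂ with hc2_def
    have hpc1 : pa c₁ = w := by
      rw [hc1_def, hw_def]
      exact (Function.iterate_succ_apply' pa ks' v₁).symm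
    have hpc2 : pa c₂ = w := by
      rw [hc2_def, ← hjs_spec]
      exact (Function.iterate_succ_apply' pa js' v₂).symm
    have hc1_ne : c₁ ≠ 0 := by
      intro h
      have hh : ∃ j, pa^[j] v₂ = pa^[ks'] v₁ := ⟨k2, by rw [hk2, ← hc1_def, h]⟩
      exact hks_min ks' (by omega) hh
    have hc2_ne : c₂ ≠ 0 := by
      intro h
      have hw0 : w = 0 := by rw [← hpc2, h, hpz]
      have hh : pa^[js'] v₂ = w := by rw [← hc2_def, h, hw0]
      exact hjs_min js' (by omega) hh
    have hc12 : c₁ ≠ c₂ := by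
      intro h
      have hh : ∃ j, pa^[j] v₂ = pa^[ks'] v₁ := ⟨js', by rw [← hc2_def, ← h, hc1_def]⟩
      exact hks_min ks' (by omega) hh
    obtain ⟨e₁, he₁, he₁h, he₁t⟩ := hpaArc c₁ hc1_ne
    obtain ⟨e₂, he₂, he₂h, he₂t⟩ := hpaArc c₂ hc2_ne
    rw [hpc1] at he₁t
    rw [hpc2] at he₂t
    have hd1 : Descend F c₁ v₁ := (hdesc_iff c₁ v₁).mpr ⟨ks', rfl⟩
    have hd2 : Descend F c₂ v₂ := (hdesc_iff c₂ v₂).mpr ⟨js', rfl⟩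
    have he12 : e₁ ≠ e₂ := fun h => hc12 (by rw [← he₁h, h, he₂h])
    rcases hside with hws | hws
    · -- w lies left of both
      have hwlt1 : w < v₁ := lt_of_lt_of_le hws (min_le_left _ _)
      have hwlt2 : w < v₂ := lt_of_lt_of_le hws (min_le_right _ _)
      have hc1w : w < c₁ := by
        rcases lt_trichotomy c₁ w with h | h | h
        · exfalso
          have hlt' : e₁.head < e₁.tail := by rw [he₁h, he₁t]; exact h
          have := wrap_S1_left hF he₁ hlt' v₁ (by rw [he₁h]; exact hd1)
          rw [he₁t] at this
          exact absurd hwlt1 (not_lt.mpr this.le)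
        · exact absurd ((he₁t.trans h.symm).trans he₁h.symm) e₁.ne
        · exact h
      have hc2w : w < c₂ := by
        rcases lt_trichotomy c₂ w with h | h | h
        · exfalso
          have hlt' : e₂.head < e₂.tail := by rw [he₂h, he₂t]; exact h
          have := wrap_S1_left hF he₂ hlt' v₂ (by rw [he₂h]; exact hd2)
          rw [he₂t] at this
          exact absurd hwlt2 (not_lt.mpr this.le)
        · exact absurd ((he₂t.trans h.symm).trans he₂h.symm) e₂.ne
        · exact h
      rcases lt_or_gt_of_ne hc12 with hcc | hcc
      · -- c₁ < c₂ : private cut of e₂ is covered by e₁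
        have hgr : e₂.tail < e₂.head := by rw [he₂h, he₂t]; exact hc2w
        obtain ⟨a, b, -, hwa, hsucc, hcb, -, honly⟩ := wrap_P_right hF he₂ hgr
        rw [he₂t] at hwa hsucc
        rw [he₂h] at hcb
        refine honly e₁ he₁ he12 ⟨?_, ?_⟩
        · rw [he₁t]
          intro hmem
          rw [Finset.mem_Icc] at hmem
          exact absurd hwa (not_lt.mpr hmem.1)
        · rw [he₁h, Finset.mem_Icc]
          exact ⟨hsucc _ hc1w, le_trans hcc.le hcb⟩
      · -- c₂ < c₁ : private cut of e₁ is covered by e₂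
        have hgr : e₁.tail < e₁.head := by rw [he₁h, he₁t]; exact hc1w
        obtain ⟨a, b, -, hwa, hsucc, hcb, -, honly⟩ := wrap_P_right hF he₁ hgr
        rw [he₁t] at hwa hsucc
        rw [he₁h] at hcb
        refine honly e₂ he₂ (fun h => he12 h.symm) ⟨?_, ?_⟩
        · rw [he₂t]
          intro hmem
          rw [Finset.mem_Icc] at hmem
          exact absurd hwa (not_lt.mpr hmem.1)
        · rw [he₂h, Finset.mem_Icc]
          exact ⟨hsucc _ hc2w, le_trans hcc.le hcb⟩
    · -- w lies right of both
      have hwlt1 : v₁ < w := lt_of_le_of_lt (le_max_left _ _) hws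
      have hwlt2 : v₂ < w := lt_of_le_of_lt (le_max_right _ _) hws
      have hc1w : c₁ < w := by
        rcases lt_trichotomy c₁ w with h | h | h
        · exact h
        · exact absurd ((he₁t.trans h.symm).trans he₁h.symm) e₁.ne
        · exfalso
          have hlt' : e₁.tail < e₁.head := by rw [he₁h, he₁t]; exact h
          have := wrap_S1_right hF he₁ hlt' v₁ (by rw [he₁h]; exact hd1)
          rw [he₁t] at this
          exact absurd hwlt1 (not_lt.mpr this.le)
      have hc2w : c₂ < w := by
        rcases lt_trichotomy c₂ w with h | h | h
        · exact h
        · exact absurd ((he₂t.trans h.symm).trans he₂h.symm) e₂.ne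
        · exfalso
          have hlt' : e₂.tail < e₂.head := by rw [he₂h, he₂t]; exact h
          have := wrap_S1_right hF he₂ hlt' v₂ (by rw [he₂h]; exact hd2)
          rw [he₂t] at this
          exact absurd hwlt2 (not_lt.mpr this.le)
      rcases lt_or_gt_of_ne hc12 with hcc | hcc
      · -- c₁ < c₂ : private cut of e₁ is covered by e₂
        have hgr : e₁.head < e₁.tail := by rw [he₁h, he₁t]; exact hc1w
        obtain ⟨a, b, -, hac, hbw, hpred, -, honly⟩ := wrap_P_left hF he₁ hgr
        rw [he₁t] at hbw hpred
        rw [he₁h] at hac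
        refine honly e₂ he₂ (fun h => he12 h.symm) ⟨?_, ?_⟩
        · rw [he₂t]
          intro hmem
          rw [Finset.mem_Icc] at hmem
          exact absurd hbw (not_lt.mpr hmem.2)
        · rw [he₂h, Finset.mem_Icc]
          exact ⟨le_trans hac hcc.le, hpred _ hc2w⟩
      · -- c₂ < c₁ : private cut of e₂ is covered by e₁
        have hgr : e₂.head < e₂.tail := by rw [he₂h, he₂t]; exact hc2w
        obtain ⟨a, b, -, hac, hbw, hpred, -, honly⟩ := wrap_P_left hF he₂ hgr
        rw [he₂t] at hbw hpred
        rw [he₂h] at hac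
        refine honly e₁ he₁ he12 ⟨?_, ?_⟩
        · rw [he₁t]
          intro hmem
          rw [Finset.mem_Icc] at hmem
          exact absurd hbw (not_lt.mpr hmem.2)
        · rw [he₁h, Finset.mem_Icc]
          exact ⟨le_trans hac hcc.le, hpred _ hc1w⟩
  refine ⟨w, hlca, ?_, ?_⟩
  · by_contra h
    push_neg at h
    exact hbetween (Or.inl h)
  · by_contra h
    push_neg at h
    exact hbetween (Or.inr h)
end

section
/- Let (G, L, c, r, e_r) be a rooted WRAP instance and F⃗ a non-shortenable directed WRAP solution. Then for every 2-cut C ∈ C_G there is exactly one directed link ℓ⃗ ∈ F⃗ that is responsible for C; equivalently, the sets R_{F⃗}(ℓ⃗) for ℓ⃗ ∈ F⃗ partition C_G. -/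
variable {n : ℕ}

/-! ### Auxiliary development for Statement 3 -/

namespace WrapAux

open Finset

open scoped Classical

variable {n : ℕ}

/-- One step of the descendance relation. -/
abbrev stepF (F : Finset (DLink n)) (a b : Fin n) : Prop :=
  ∃ d ∈ F, d.tail = a ∧ d.head = b

lemma descend_iff_rtg (F : Finset (DLink n)) (u v : Fin n) :
    Descend F u v ↔ Relation.ReflTransGen (stepF F) u v := Iff.rfl

/-- Walks of a given length. -/
def DescN (F : Finset (DLink n)) : ℕ → Fin n → Fin n → Prop
  | 0, a, b => a = b
  | (k+1), a, b => ∃ c, stepF F a c ∧ DescN F k c b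

lemma descN_snoc {F : Finset (DLink n)} :
    ∀ (k : ℕ) (u v w : Fin n), DescN F k u v → stepF F v w → DescN F (k+1) u w := by
  intro k
  induction k with
  | zero => intro u v w h hs; cases h; exact ⟨w, hs, rfl⟩
  | succ k ih =>
    rintro u v w ⟨c, hc, hrest⟩ hs
    exact ⟨c, hc, ih c v w hrest hs⟩

lemma descN_trans {F : Finset (DLink n)} :
    ∀ (i j : ℕ) (u v w : Fin n), DescN F i u v → DescN F j v w → DescN F (i+j) u w := by
  intro i
  induction i with
  | zero => intro j u v w h1 h2; cases h1; simpa using h2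
  | succ i ih =>
    rintro j u v w ⟨c, hc, hrest⟩ h2
    have he : i + 1 + j = (i + j) + 1 := by omega
    rw [he]
    exact ⟨c, hc, ih j c v w hrest h2⟩

lemma descend_iff_descN {F : Finset (DLink n)} {u v : Fin n} :
    Descend F u v ↔ ∃ k, DescN F k u v := by
  constructor
  · intro h
    induction h with
    | refl => exact ⟨0, rfl⟩
    | tail _ hs ih =>
      obtain ⟨k, hk⟩ := ih
      exact ⟨k+1, descN_snoc k _ _ _ hk hs⟩
  · rintro ⟨k, hk⟩
    induction k generalizing u with
    | zero => cases hk; exact Relation.ReflTransGen.refl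
    | succ k ih =>
      obtain ⟨c, hc, hrest⟩ := hk
      exact Relation.ReflTransGen.head hc (ih hrest)

lemma descend_single {F : Finset (DLink n)} {d : DLink n} (hd : d ∈ F) :
    Descend F d.tail d.head :=
  Relation.ReflTransGen.single ⟨d, hd, rfl, rfl⟩

/-- The first-entry lemma: a walk from outside a set to inside it contains an
entering link. -/
lemma entry {F : Finset (DLink n)} (S : Finset (Fin n)) :
    ∀ (k : ℕ) (u z : Fin n), u ∉ S → z ∈ S → DescN F k u z →
    ∃ e ∈ F, e.tail ∉ S ∧ e.head ∈ S ∧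
      ∃ i j : ℕ, DescN F i u e.tail ∧ DescN F j e.head z ∧ i + 1 + j = k := by
  intro k
  induction k with
  | zero => intro u z hu hz h; cases h; exact absurd hz hu
  | succ k ih =>
    rintro u z hu hz ⟨c, hc, hrest⟩
    by_cases hcS : c ∈ S
    · obtain ⟨e, heF, het, heh⟩ := hc
      refine ⟨e, heF, ?_, ?_, 0, k, ?_, ?_, by omega⟩
      · rw [het]; exact hu
      · rw [heh]; exact hcS
      · rw [het]; rfl
      · rw [heh]; exact hrest
    · obtain ⟨e, heF, ht, hh, i, j, hi, hj, hij⟩ := ih c z hcS hz hrest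
      exact ⟨e, heF, ht, hh, i+1, j, ⟨c, hc, hi⟩, hj, by omega⟩

section NZ

variable [NeZero n]

lemma isCut_zero_not_mem {C : Finset (Fin n)} (h : IsCut C) : (0 : Fin n) ∉ C := by
  obtain ⟨a, b, ha, hab, rfl⟩ := h
  intro h0
  rw [Finset.mem_Icc] at h0
  exact absurd (lt_of_lt_of_le ha h0.1) (lt_irrefl _)

lemma isCut_mem_between {C : Finset (Fin n)} (h : IsCut C) {x y z : Fin n}
    (hx : x ∈ C) (hy : y ∈ C) (h1 : x ≤ z) (h2 : z ≤ y) : z ∈ C := by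
  obtain ⟨a, b, _, _, rfl⟩ := h
  rw [Finset.mem_Icc] at hx hy ⊢
  exact ⟨le_trans hx.1 h1, le_trans h2 hy.2⟩

/-- A cut uniquely covered by `g` within `F`. -/
def UCov (F : Finset (DLink n)) (g : DLink n) (B : Finset (Fin n)) : Prop :=
  IsCut B ∧ DCovers g B ∧ ∀ e ∈ F, DCovers e B → e = g

/-- From deletion-minimality: every link has a uniquely covered cut. -/
lemma exists_ucov {F : Finset (DLink n)} (hF : NonShortenable F) {d : DLink n}
    (hd : d ∈ F) : ∃ B, UCov F d B := by
  have h := hF.2.1 d hd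
  rw [IsDirSolution] at h
  push_neg at h
  obtain ⟨B, hBcut, hB⟩ := h
  obtain ⟨e, heF, hecov⟩ := hF.1 B hBcut
  have hed : e = d := by
    by_contra hne
    exact hB e (Finset.mem_erase.2 ⟨hne, heF⟩) hecov
  subst hed
  refine ⟨B, hBcut, hecov, ?_⟩
  intro e' he' hcov'
  by_contra hne
  exact hB e' (Finset.mem_erase.2 ⟨hne, he'⟩) hcov'

/-- From non-shortenability: for every point `s` strictly between the tail
and head of `d`, there is a cut uniquely covered by `d` containing `s`. -/
lemma exists_ucov_mem {F : Finset (DLink n)} (hF : NonShortenable F) {d : DLink n}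
    (hd : d ∈ F) (s : Fin n) (hs1 : min d.tail d.head ≤ s)
    (hs2 : s ≤ max d.tail d.head) (hsh : s ≠ d.head) (hst : s ≠ d.tail) :
    ∃ B, UCov F d B ∧ s ∈ B := by
  have hne : (⟨s, d.head, hsh⟩ : DLink n) ≠ d := by
    intro h
    exact hst (congrArg DLink.tail h)
  have h := hF.2.2 d hd ⟨s, d.head, hsh⟩ ⟨rfl, hs1, hs2⟩ hne
  rw [IsDirSolution] at h
  push_neg at h
  obtain ⟨B, hBcut, hB⟩ := h
  obtain ⟨e, heF, hecov⟩ := hF.1 B hBcut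
  have hed : e = d := by
    by_contra hne'
    exact hB e (Finset.mem_insert_of_mem (Finset.mem_erase.2 ⟨hne', heF⟩)) hecov
  subst hed
  have hsB : s ∈ B := by
    by_contra hs
    exact hB _ (Finset.mem_insert_self _ _) ⟨hs, hecov.2⟩
  refine ⟨B, ⟨hBcut, hecov, ?_⟩, hsB⟩
  intro e' he' hcov'
  by_contra hne'
  exact hB e' (Finset.mem_insert_of_mem (Finset.mem_erase.2 ⟨hne', he'⟩)) hcov'

/-- Every vertex is reachable from the root. -/
lemma reach {F : Finset (DLink n)} (hF : NonShortenable F) (v : Fin n) :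
    Descend F 0 v := by
  by_contra hv
  set U : Finset (Fin n) := Finset.univ.filter (fun u => ¬ Descend F 0 u) with hU
  have hUne : U.Nonempty := ⟨v, by simp [hU, hv]⟩
  have hmemU : ∀ u : Fin n, u ∈ U ↔ ¬ Descend F 0 u := by
    intro u; simp [hU]
  have h0U : (0 : Fin n) ∉ U := by
    rw [hmemU]; exact not_not.2 Relation.ReflTransGen.refl
  set u1 := U.min' hUne with hu1
  have hu1U : u1 ∈ U := U.min'_mem hUne
  have hu1pos : 0 < u1 := by
    rcases eq_or_lt_of_le (Fin.zero_le u1) with h | h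
    · exact absurd hu1U (h ▸ h0U)
    · exact h
  set S2 : Finset (Fin n) :=
    Finset.univ.filter (fun w => u1 ≤ w ∧ ∀ z : Fin n, u1 ≤ z → z ≤ w → z ∈ U) with hS2
  have hS2ne : S2.Nonempty := by
    refine ⟨u1, ?_⟩
    simp only [hS2, Finset.mem_filter, Finset.mem_univ, true_and]
    exact ⟨le_refl _, fun z h1 h2 => (le_antisymm h2 h1) ▸ hu1U⟩
  set u2 := S2.max' hS2ne with hu2
  have hu2S2 : u2 ∈ S2 := S2.max'_mem hS2ne
  rw [hS2, Finset.mem_filter] at hu2S2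
  obtain ⟨-, hu1u2, hIccU⟩ := hu2S2
  have hIcut : IsCut (Finset.Icc u1 u2) := ⟨u1, u2, hu1pos, hu1u2, rfl⟩
  obtain ⟨d, hdF, hdt, hdh⟩ := hF.1 _ hIcut
  rw [Finset.mem_Icc] at hdh
  have htU : d.tail ∈ U := by
    rw [hmemU]
    intro hreach
    have : Descend F 0 d.head := hreach.tail ⟨d, hdF, rfl, rfl⟩
    exact (hmemU d.head).1 (hIccU d.head hdh.1 hdh.2) this
  have hu1t : u1 ≤ d.tail := U.min'_le _ htU
  have hu2t : u2 < d.tail := by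
    by_contra h
    push_neg at h
    exact hdt (Finset.mem_Icc.2 ⟨hu1t, h⟩)
  have hvallt : u2.val + 1 < n := lt_of_le_of_lt (Nat.succ_le_of_lt hu2t) d.tail.isLt
  set w : Fin n := ⟨u2.val + 1, hvallt⟩ with hw
  have hu2w : u2 < w := by rw [Fin.lt_def]; simp [hw]
  have hwt : w ≤ d.tail := by
    rw [Fin.le_def]
    exact Nat.succ_le_of_lt hu2t
  have hwU : w ∉ U := by
    intro hwU
    have hwS2 : w ∈ S2 := by
      simp only [hS2, Finset.mem_filter, Finset.mem_univ, true_and]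
      refine ⟨le_trans hu1u2 (le_of_lt hu2w), fun z h1 h2 => ?_⟩
      rcases lt_or_eq_of_le h2 with h | h
      · have : z ≤ u2 := by
          rw [Fin.le_def]
          rw [Fin.lt_def] at h
          simp only [hw] at h
          omega
        exact hIccU z h1 this
      · exact h ▸ hwU
    have := S2.le_max' w hwS2
    rw [← hu2] at this
    exact absurd (lt_of_lt_of_le hu2w this) (lt_irrefl _)
  have hwreach : Descend F 0 w := by
    by_contra h
    exact hwU ((hmemU w).2 h)
  have hheadw : d.head < w := lt_of_le_of_lt hdh.2 hu2w
  obtain ⟨B, hUB, hwB⟩ := exists_ucov_mem hF hdF w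
    (le_trans (min_le_right _ _) (le_of_lt hheadw)) (le_trans hwt (le_max_left _ _))
    (ne_of_gt hheadw) (fun h => hwU (by rw [h]; exact htU))
  obtain ⟨k, hk⟩ := descend_iff_descN.1 hwreach
  obtain ⟨e, heF, het, heh, i, j, hi, hj, hij⟩ :=
    entry B k 0 w (isCut_zero_not_mem hUB.1) hwB hk
  have hed : e = d := hUB.2.2 e heF ⟨het, heh⟩
  rw [hed] at hi
  exact (hmemU d.tail).1 htU (descend_iff_descN.2 ⟨i, hi⟩)

variable {F : Finset (DLink n)}

/-- Distance from the root. -/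
noncomputable def rho (F : Finset (DLink n)) (v : Fin n) : ℕ :=
  sInf {k | DescN F k 0 v}

lemma rho_spec (hF : NonShortenable F) (v : Fin n) : DescN F (rho F v) 0 v :=
  Nat.sInf_mem (descend_iff_descN.1 (reach hF v))

lemma rho_min {k : ℕ} {v : Fin n} (h : DescN F k 0 v) : rho F v ≤ k :=
  Nat.sInf_le h

/-- Members of a uniquely covered cut are descendants of the head. -/
lemma descend_of_mem_ucov (hF : NonShortenable F) {g : DLink n} {B : Finset (Fin n)}
    (hUB : UCov F g B) {z : Fin n} (hz : z ∈ B) : Descend F g.head z := by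
  obtain ⟨k, hk⟩ := descend_iff_descN.1 (reach hF z)
  obtain ⟨e, heF, het, heh, i, j, hi, hj, hij⟩ :=
    entry B k 0 z (isCut_zero_not_mem hUB.1) hz hk
  have hed : e = g := hUB.2.2 e heF ⟨het, heh⟩
  subst hed
  exact descend_iff_descN.2 ⟨j, hj⟩

/-- `rho` strictly increases along links. -/
lemma rho_edge (hF : NonShortenable F) {d : DLink n} (hd : d ∈ F) :
    rho F d.tail < rho F d.head := by
  obtain ⟨B, hUB⟩ := exists_ucov hF hd
  obtain ⟨e, heF, het, heh, i, j, hi, hj, hij⟩ :=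
    entry B (rho F d.head) 0 d.head (isCut_zero_not_mem hUB.1) hUB.2.1.2
      (rho_spec hF d.head)
  have hed : e = d := hUB.2.2 e heF ⟨het, heh⟩
  subst hed
  have := rho_min hi
  omega

lemma rho_mono' (hF : NonShortenable F) {k : ℕ} :
    ∀ {u v : Fin n}, DescN F k u v → rho F u ≤ rho F v := by
  induction k with
  | zero => intro u v hk; cases hk; exact le_refl _
  | succ k ih =>
    rintro u v ⟨c, ⟨d, hdF, hdt, hdh⟩, hrest⟩
    have h1 : rho F u < rho F c := by
      have := rho_edge hF hdF
      rwa [hdt, hdh] at this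
    exact le_trans (le_of_lt h1) (ih hrest)

lemma rho_mono (hF : NonShortenable F) {u v : Fin n} (h : Descend F u v) :
    rho F u ≤ rho F v := by
  obtain ⟨k, hk⟩ := descend_iff_descN.1 h
  exact rho_mono' hF hk

/-- Forcing: a link different from `g` whose head lies in a cut uniquely
covered by `g` has its tail in the cut as well. -/
lemma tail_mem_of_head_mem (hUB : UCov F g B) (he : e ∈ F) (hne : e ≠ g)
    (hh : e.head ∈ B) : e.tail ∈ B := by
  by_contra ht
  exact hne (hUB.2.2 e he ⟨ht, hh⟩)

/-- No vertex of `C` descends to the tail of a responsible link. -/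
lemma not_descend_of_mem_cut (hF : NonShortenable F) {d : DLink n}
    {C : Finset (Fin n)} (hr : Responsible F d C) {v : Fin n} (hv : v ∈ C)
    (hdes : Descend F v d.tail) : False := by
  obtain ⟨k, hk⟩ := descend_iff_descN.1 (reach hF v)
  obtain ⟨e, heF, het, heh, i, j, hi, hj, hij⟩ :=
    entry C k 0 v (isCut_zero_not_mem hr.1) hv hk
  have : Descend F e.head d.tail :=
    Relation.ReflTransGen.trans (descend_iff_descN.2 ⟨j, hj⟩) hdes
  exact hr.2.2 e heF this ⟨het, heh⟩

/-- Existence of a responsible link: take a cover whose tail is closest to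
the root. -/
lemma resp_exists (hF : NonShortenable F) {C : Finset (Fin n)} (hC : IsCut C) :
    ∃ d ∈ F, Responsible F d C := by
  have hne : (F.filter (fun d => DCovers d C)).Nonempty := by
    obtain ⟨d, hd, hcov⟩ := hF.1 C hC
    exact ⟨d, Finset.mem_filter.2 ⟨hd, hcov⟩⟩
  obtain ⟨d, hdc, hmin⟩ := (F.filter (fun d => DCovers d C)).exists_min_image
    (fun d => rho F d.tail) hne
  rw [Finset.mem_filter] at hdc
  refine ⟨d, hdc.1, hC, hdc.2, ?_⟩
  intro d' hd' hdes hcov'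
  have hmin' : rho F d.tail ≤ rho F d'.tail :=
    hmin d' (Finset.mem_filter.2 ⟨hd', hcov'⟩)
  have h2 : rho F d'.head ≤ rho F d.tail := rho_mono hF hdes
  have h3 : rho F d'.tail < rho F d'.head := rho_edge hF hd'
  omega

/-- Uniqueness, asymmetric version (`d1` has the smaller head). -/
lemma resp_unique_aux (hF : NonShortenable F) {C : Finset (Fin n)}
    {d1 d2 : DLink n} (h1 : d1 ∈ F) (h2 : d2 ∈ F)
    (r1 : Responsible F d1 C) (r2 : Responsible F d2 C)
    (hne : d1 ≠ d2) (hlt : d1.head < d2.head) : False := by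
  obtain ⟨a, b, ha, hab, hCeq⟩ := r1.1
  subst hCeq
  have hc1 := r1.2.1
  have hc2 := r2.2.1
  have hh1 : a ≤ d1.head ∧ d1.head ≤ b := Finset.mem_Icc.1 hc1.2
  have hh2 : a ≤ d2.head ∧ d2.head ≤ b := Finset.mem_Icc.1 hc2.2
  have htail : ∀ {e : DLink n}, e.tail ∉ Finset.Icc a b → e.tail < a ∨ b < e.tail := by
    intro e he
    rw [Finset.mem_Icc] at he
    push_neg at he
    rcases lt_or_ge e.tail a with h | h
    · exact Or.inl h
    · exact Or.inr (he h)
  rcases htail hc2.1 with ht2 | ht2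
  · -- `d2.tail < a` : shorten `d2` to `(d1.head, d2.head)`.
    obtain ⟨B, hUB, hmem⟩ := exists_ucov_mem hF h2 d1.head
      (le_trans (min_le_left _ _) (le_of_lt (lt_of_lt_of_le ht2 hh1.1)))
      (le_trans (le_of_lt hlt) (le_max_right _ _))
      (ne_of_lt hlt) (ne_of_gt (lt_of_lt_of_le ht2 hh1.1))
    have ht1B : d1.tail ∈ B := tail_mem_of_head_mem hUB h1 hne hmem
    exact r1.2.2 d2 h2 (descend_of_mem_ucov hF hUB ht1B) hc2
  rcases htail hc1.1 with ht1 | ht1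
  swap
  · -- `b < d1.tail` : shorten `d1` to `(d2.head, d1.head)`.
    obtain ⟨B, hUB, hmem⟩ := exists_ucov_mem hF h1 d2.head
      (le_trans (min_le_right _ _) (le_of_lt hlt))
      (le_trans (le_of_lt (lt_of_le_of_lt hh2.2 ht1)) (le_max_left _ _))
      (ne_of_gt hlt) (ne_of_lt (lt_of_le_of_lt hh2.2 ht1))
    have ht2B : d2.tail ∈ B := tail_mem_of_head_mem hUB h2 (Ne.symm hne) hmem
    exact r2.2.2 d1 h1 (descend_of_mem_ucov hF hUB ht2B) hc1
  -- Hard case: `d1.tail < a ≤ d1.head < d2.head ≤ b < d2.tail`.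
  -- Consider links jumping over the cut; take one whose head is farthest
  -- from the root and derive a contradiction.
  set T : Finset (DLink n) :=
    F.filter (fun j => (j.tail < a ∧ b < j.head) ∨ (b < j.tail ∧ j.head < a)) with hT
  have hTne : T.Nonempty := by
    obtain ⟨k, hk⟩ := descend_iff_descN.1 (reach hF d2.tail)
    obtain ⟨e, heF, het, heh, i, j, hi, hj, hij⟩ :=
      entry (Finset.univ.filter (fun v => b < v)) k 0 d2.tail
        (by simp only [Finset.mem_filter, Finset.mem_univ, true_and]
            exact not_lt.2 (Fin.zero_le b))
        (by simp only [Finset.mem_filter, Finset.mem_univ, true_and]; exact ht2) hk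
    simp only [Finset.mem_filter, Finset.mem_univ, true_and] at het heh
    push_neg at het
    have hta : e.tail < a := by
      by_contra h
      push_neg at h
      exact not_descend_of_mem_cut hF r2 (Finset.mem_Icc.2 ⟨h, het⟩)
        (Relation.ReflTransGen.trans (descend_single heF) (descend_iff_descN.2 ⟨j, hj⟩))
    exact ⟨e, by rw [hT, Finset.mem_filter]; exact ⟨heF, Or.inl ⟨hta, heh⟩⟩⟩
  obtain ⟨j0, hj0T, hmax⟩ := T.exists_max_image (fun j => rho F j.head) hTne
  rw [hT, Finset.mem_filter] at hj0T
  obtain ⟨hj0F, hj0dir⟩ := hj0T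
  rcases hj0dir with ⟨hjt, hjh⟩ | ⟨hjt, hjh⟩
  · -- `j0` jumps left-to-right over the cut; shorten it to `(d1.head, j0.head)`.
    have h1j : d1.head < j0.head := lt_of_le_of_lt hh1.2 hjh
    obtain ⟨B, hUB, hmem⟩ := exists_ucov_mem hF hj0F d1.head
      (le_trans (min_le_left _ _) (le_of_lt (lt_of_lt_of_le hjt hh1.1)))
      (le_trans (le_of_lt h1j) (le_max_right _ _))
      (ne_of_lt h1j) (ne_of_gt (lt_of_lt_of_le hjt hh1.1))
    have hd1j : d1 ≠ j0 := by
      intro h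
      rw [h] at h1j
      exact lt_irrefl _ h1j
    have ht1B : d1.tail ∈ B := tail_mem_of_head_mem hUB h1 hd1j hmem
    obtain ⟨k, hk⟩ := descend_iff_descN.1 (descend_of_mem_ucov hF hUB ht1B)
    obtain ⟨e, heF, het, heh, i, j, hi, hj, hij⟩ :=
      entry (Finset.univ.filter (fun v => v < a)) k j0.head d1.tail
        (by simp only [Finset.mem_filter, Finset.mem_univ, true_and]
            exact not_lt.2 (le_trans hab (le_of_lt hjh)))
        (by simp only [Finset.mem_filter, Finset.mem_univ, true_and]; exact ht1) hk
    simp only [Finset.mem_filter, Finset.mem_univ, true_and] at het heh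
    push_neg at het
    have htb : b < e.tail := by
      by_contra h
      push_neg at h
      exact not_descend_of_mem_cut hF r1 (Finset.mem_Icc.2 ⟨het, h⟩)
        (Relation.ReflTransGen.trans (descend_single heF) (descend_iff_descN.2 ⟨j, hj⟩))
    have heT : e ∈ T := by rw [hT, Finset.mem_filter]; exact ⟨heF, Or.inr ⟨htb, heh⟩⟩
    have h5 := hmax e heT
    have h6 : rho F j0.head ≤ rho F e.tail := rho_mono' hF hi
    have h7 : rho F e.tail < rho F e.head := rho_edge hF heF
    omega
  · -- `j0` jumps right-to-left over the cut; shorten it to `(d2.head, j0.head)`.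
    have h2j : j0.head < d2.head := lt_of_lt_of_le hjh hh2.1
    obtain ⟨B, hUB, hmem⟩ := exists_ucov_mem hF hj0F d2.head
      (le_trans (min_le_right _ _) (le_of_lt h2j))
      (le_trans (le_of_lt (lt_of_le_of_lt hh2.2 hjt)) (le_max_left _ _))
      (ne_of_gt h2j) (ne_of_lt (lt_of_le_of_lt hh2.2 hjt))
    have hd2j : d2 ≠ j0 := by
      intro h
      rw [h] at h2j
      exact lt_irrefl _ h2j
    have ht2B : d2.tail ∈ B := tail_mem_of_head_mem hUB h2 hd2j hmem
    obtain ⟨k, hk⟩ := descend_iff_descN.1 (descend_of_mem_ucov hF hUB ht2B)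
    obtain ⟨e, heF, het, heh, i, j, hi, hj, hij⟩ :=
      entry (Finset.univ.filter (fun v => b < v)) k j0.head d2.tail
        (by simp only [Finset.mem_filter, Finset.mem_univ, true_and]
            exact not_lt.2 (le_of_lt (lt_of_lt_of_le hjh hab)))
        (by simp only [Finset.mem_filter, Finset.mem_univ, true_and]; exact ht2) hk
    simp only [Finset.mem_filter, Finset.mem_univ, true_and] at het heh
    push_neg at het
    have hta : e.tail < a := by
      by_contra h
      push_neg at h
      exact not_descend_of_mem_cut hF r2 (Finset.mem_Icc.2 ⟨h, het⟩)
        (Relation.ReflTransGen.trans (descend_single heF) (descend_iff_descN.2 ⟨j, hj⟩))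
    have heT : e ∈ T := by rw [hT, Finset.mem_filter]; exact ⟨heF, Or.inl ⟨hta, heh⟩⟩
    have h5 := hmax e heT
    have h6 : rho F j0.head ≤ rho F e.tail := rho_mono' hF hi
    have h7 : rho F e.tail < rho F e.head := rho_edge hF heF
    omega

/-- Uniqueness of the responsible link. -/
lemma resp_unique (hF : NonShortenable F) {C : Finset (Fin n)}
    {d1 d2 : DLink n} (h1 : d1 ∈ F) (h2 : d2 ∈ F)
    (r1 : Responsible F d1 C) (r2 : Responsible F d2 C) : d1 = d2 := by
  by_contra hne
  rcases lt_trichotomy d1.head d2.head with h | h | h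
  · exact resp_unique_aux hF h1 h2 r1 r2 hne h
  · obtain ⟨B, hUB⟩ := exists_ucov hF h1
    have hh2B : d2.head ∈ B := h ▸ hUB.2.1.2
    have ht2B : d2.tail ∈ B := tail_mem_of_head_mem hUB h2 (Ne.symm hne) hh2B
    exact r2.2.2 d1 h1 (descend_of_mem_ucov hF hUB ht2B) r1.2.1
  · exact resp_unique_aux hF h2 h1 r2 r1 (Ne.symm hne) h

end NZ

end WrapAux

/-- for a non-shortenable directed WRAP solution `F`, every
2-cut `C ∈ C_G` has exactly one directed link of `F` responsible for it
(equivalently, the sets `R_F(ℓ)`, `ℓ ∈ F`, partition `C_G`). -/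
theorem responsibility_unique {n : ℕ}
    (L : Finset (Link (n + 3))) (c : Link (n + 3) → ℝ)
    (F : Finset (DLink (n + 3))) (hF : NonShortenable F)
    (C : Finset (Fin (n + 3))) (hC : IsCut C) :
    ∃! d : DLink (n + 3), d ∈ F ∧ Responsible F d C := by
  obtain ⟨d, hd, hr⟩ := WrapAux.resp_exists hF hC
  refine ⟨d, ⟨hd, hr⟩, ?_⟩
  rintro e ⟨he, hre⟩
  exact WrapAux.resp_unique hF he hd hre hr
end

section
/- Let (G, L, c, r, e_r) be a rooted WRAP instance, K ⊆ L, and C ∈ C_G. Then δ_K(C) ≠ ∅ (some link of K has exactly one endpoint in C) if and only if there exists a vertex v ∈ C that is connected to a vertex w ∈ V \ C in the link intersection graph H[K]. -/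
variable {n : ℕ}

/-- for `K ⊆ L` and a 2-cut `C ∈ C_G`, we have
`δ_K(C) ≠ ∅` iff some vertex of `C` is connected to a vertex outside of `C`
in the link intersection graph `H[K]`. -/
theorem cut_covered_iff_connected_outside {n : ℕ}
    (L : Finset (Link (n + 3))) (c : Link (n + 3) → ℝ)
    (K : Finset (Link (n + 3))) (hK : K ⊆ L)
    (C : Finset (Fin (n + 3))) (hC : IsCut C) :
    (cutLinks K C).Nonempty ↔
      ∃ v ∈ C, ∃ w : Fin (n + 3), w ∉ C ∧ ConnVert K v w := by
  obtain ⟨a, b, ha, hab, hCeq⟩ := hC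
  subst hCeq
  constructor
  · rintro ⟨ℓ, hℓ⟩
    simp only [cutLinks, Finset.mem_filter] at hℓ
    obtain ⟨hℓK, hcross⟩ := hℓ
    rcases hcross with ⟨h1, h2⟩ | ⟨h1, h2⟩
    · exact ⟨ℓ.lo, h1, ℓ.hi, h2, ℓ, hℓK, ℓ, hℓK, Or.inl rfl, Or.inr rfl, .refl⟩
    · exact ⟨ℓ.hi, h2, ℓ.lo, h1, ℓ, hℓK, ℓ, hℓK, Or.inr rfl, Or.inl rfl, .refl⟩
  · rintro ⟨v, hv, w, hw, ℓ, hℓK, f, hfK, hℓv, hfw, hpath⟩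
    by_contra hempty
    rw [Finset.not_nonempty_iff_eq_empty] at hempty
    have hnc : ∀ g ∈ K, (g.lo ∈ Finset.Icc a b ↔ g.hi ∈ Finset.Icc a b) := by
      intro g hg
      have hnot : ¬ crossesCut g (Finset.Icc a b) := by
        intro h
        have : g ∈ cutLinks K (Finset.Icc a b) := Finset.mem_filter.mpr ⟨hg, h⟩
        simp [hempty] at this
      unfold crossesCut at hnot
      tauto
    have key : ∀ g, Relation.ReflTransGen
        (fun x y => x ∈ K ∧ y ∈ K ∧ Intersects x y) ℓ g →
        g.lo ∈ Finset.Icc a b ∧ g.hi ∈ Finset.Icc a b := by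
      intro g hg
      induction hg with
      | refl =>
        rcases hℓv with h | h
        · exact ⟨h ▸ hv, (hnc ℓ hℓK).mp (h ▸ hv)⟩
        · exact ⟨(hnc ℓ hℓK).mpr (h ▸ hv), h ▸ hv⟩
      | tail hstep hlast ih =>
        rename_i x y
        obtain ⟨hxK, hyK, hint⟩ := hlast
        obtain ⟨hxlo, hxhi⟩ := ih
        suffices hy : y.lo ∈ Finset.Icc a b ∨ y.hi ∈ Finset.Icc a b by
          rcases hy with h | h
          · exact ⟨h, (hnc y hyK).mp h⟩
          · exact ⟨(hnc y hyK).mpr h, h⟩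
        rcases hint with (h | h | h | h) | (⟨h1, h2, h3⟩ | ⟨h1, h2, h3⟩)
        · exact Or.inl (h ▸ hxlo)
        · exact Or.inr (h ▸ hxlo)
        · exact Or.inl (h ▸ hxhi)
        · exact Or.inr (h ▸ hxhi)
        · -- x.lo < y.lo < x.hi < y.hi : y.lo between
          simp only [Finset.mem_Icc] at hxlo hxhi ⊢
          exact Or.inl ⟨le_of_lt (lt_of_le_of_lt hxlo.1 h1),
            le_trans (le_of_lt h2) hxhi.2⟩
        · -- y.lo < x.lo < y.hi < x.hi : y.hi between
          simp only [Finset.mem_Icc] at hxlo hxhi ⊢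
          exact Or.inr ⟨le_of_lt (lt_of_le_of_lt hxlo.1 h2),
            le_trans (le_of_lt h3) hxhi.2⟩
    obtain ⟨hflo, hfhi⟩ := key f hpath
    rcases hfw with h | h
    · exact hw (h ▸ hflo)
    · exact hw (h ▸ hfhi)
end

section
/- Let (G, L, c, r, e_r) be a rooted WRAP instance and F⃗ a non-shortenable directed WRAP solution. Then a directed link (u, v) ∈ F⃗ is responsible for a 2-cut C ∈ C_G if and only if v ∈ C and every vertex of C is v-bad. -/
variable {n : ℕ}

set_option linter.unusedSectionVars false
set_option maxHeartbeats 1000000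
namespace WRAPProof

variable {N : ℕ} [NeZero N]

lemma fin_pos_iff' {z : Fin N} : 0 < z ↔ z ≠ 0 := by
  constructor
  · rintro h rfl; exact lt_irrefl _ h
  · intro h
    rcases eq_or_lt_of_le (Fin.zero_le z) with h' | h'
    · exact absurd h'.symm h
    · exact h'

lemma cut_zero_not_mem {C : Finset (Fin N)} (hC : IsCut C) : (0 : Fin N) ∉ C := by
  obtain ⟨a, b, ha, hab, rfl⟩ := hC
  intro h0
  exact absurd (Finset.mem_Icc.1 h0).1 (not_le.mpr ha)

lemma mem_of_cut {C : Finset (Fin N)} (hC : IsCut C) {z : Fin N} (hz : z ∈ C) : z ≠ 0 := by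
  rintro rfl; exact cut_zero_not_mem hC hz

lemma DLink.ext' {d1 d2 : DLink N} (h1 : d1.tail = d2.tail) (h2 : d1.head = d2.head) :
    d1 = d2 := by
  cases d1; cases d2; simp_all

section F
variable {F : Finset (DLink N)}

lemma descend_refl (F : Finset (DLink N)) (a : Fin N) : Descend F a a :=
  Relation.ReflTransGen.refl

lemma descend_single {e : DLink N} (he : e ∈ F) : Descend F e.tail e.head :=
  Relation.ReflTransGen.single ⟨e, he, rfl, rfl⟩

lemma descend_trans {a b c : Fin N} (h1 : Descend F a b) (h2 : Descend F b c) :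
    Descend F a c := Relation.ReflTransGen.trans h1 h2

lemma descend_head {e : DLink N} (he : e ∈ F) {c : Fin N} (h : Descend F e.head c) :
    Descend F e.tail c := Relation.ReflTransGen.head ⟨e, he, rfl, rfl⟩ h

lemma descend_tail {e : DLink N} (he : e ∈ F) {a : Fin N} (h : Descend F a e.tail) :
    Descend F a e.head := Relation.ReflTransGen.tail h ⟨e, he, rfl, rfl⟩

/-- Deletion witness: a cut covered only by `d`. -/
lemma exists_del_witness (hF : NonShortenable F) {d : DLink N} (hd : d ∈ F) :
    ∃ C, IsCut C ∧ DCovers d C ∧ ∀ e ∈ F, e ≠ d → ¬ DCovers e C := by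
  have h := hF.2.1 d hd
  rw [IsDirSolution] at h
  push_neg at h
  obtain ⟨C, hCcut, hCno⟩ := h
  obtain ⟨f, hfF, hfcov⟩ := hF.1 C hCcut
  have hfd : f = d := by
    by_contra hne
    exact hCno f (Finset.mem_erase.2 ⟨hne, hfF⟩) hfcov
  subst hfd
  exact ⟨C, hCcut, hfcov, fun e he hne => hCno e (Finset.mem_erase.2 ⟨hne, he⟩)⟩

/-- Shortening witness: a cut covered only by `d` containing any prescribed
vertex `s` between the endpoints, other than the tail. -/
lemma exists_witness (hF : NonShortenable F) {d : DLink N} (hd : d ∈ F) {s : Fin N}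
    (h1 : min d.tail d.head ≤ s) (h2 : s ≤ max d.tail d.head) (h3 : s ≠ d.tail) :
    ∃ C, IsCut C ∧ DCovers d C ∧ s ∈ C ∧ ∀ e ∈ F, e ≠ d → ¬ DCovers e C := by
  by_cases hsh : s = d.head
  · obtain ⟨C, hCcut, hCcov, honly⟩ := exists_del_witness hF hd
    exact ⟨C, hCcut, hCcov, hsh ▸ hCcov.2, honly⟩
  · set d' : DLink N := ⟨s, d.head, hsh⟩ with hd'
    have hshort : IsShortening d' d := ⟨rfl, h1, h2⟩
    have hne : d' ≠ d := by
      intro h; exact h3 (congrArg DLink.tail h)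
    have h := hF.2.2 d hd d' hshort hne
    rw [IsDirSolution] at h
    push_neg at h
    obtain ⟨C, hCcut, hCno⟩ := h
    obtain ⟨f, hfF, hfcov⟩ := hF.1 C hCcut
    have hfd : f = d := by
      by_contra hne'
      exact hCno f (Finset.mem_insert_of_mem (Finset.mem_erase.2 ⟨hne', hfF⟩)) hfcov
    subst hfd
    have hsC : s ∈ C := by
      by_contra hs
      exact hCno d' (Finset.mem_insert_self _ _) ⟨hs, hfcov.2⟩
    exact ⟨C, hCcut, hfcov, hsC,
      fun e he hne'' => hCno e (Finset.mem_insert_of_mem (Finset.mem_erase.2 ⟨hne'', he⟩))⟩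

/-- Two links of `F` with the same head are equal (in-degree at most one). -/
lemma head_injective (hF : NonShortenable F) {d1 d2 : DLink N}
    (h1 : d1 ∈ F) (h2 : d2 ∈ F) (hh : d1.head = d2.head) : d1 = d2 := by
  by_contra hne
  obtain ⟨W1, hW1cut, hW1cov, hW1only⟩ := exists_del_witness hF h1
  obtain ⟨W2, hW2cut, hW2cov, hW2only⟩ := exists_del_witness hF h2
  have ht2W1 : d2.tail ∈ W1 := by
    by_contra ht
    exact hW1only d2 h2 (Ne.symm hne) ⟨ht, hh ▸ hW1cov.2⟩
  have ht1W2 : d1.tail ∈ W2 := by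
    by_contra ht
    exact hW2only d1 h1 hne ⟨ht, hh.symm ▸ hW2cov.2⟩
  obtain ⟨a1, b1, ha1, hab1, hW1⟩ := hW1cut
  obtain ⟨a2, b2, ha2, hab2, hW2⟩ := hW2cut
  have hvW1 : d1.head ∈ W1 := hW1cov.2
  have hvW2 : d1.head ∈ W2 := hh.symm ▸ hW2cov.2
  rw [hW1, Finset.mem_Icc] at hvW1
  rw [hW2, Finset.mem_Icc] at hvW2
  set U : Finset (Fin N) := Finset.Icc (min a1 a2) (max b1 b2) with hU
  have hUcut : IsCut U := by
    refine ⟨min a1 a2, max b1 b2, lt_min ha1 ha2, ?_, rfl⟩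
    exact le_trans (min_le_left _ _) (le_trans hvW1.1 (le_trans hvW1.2 (le_max_left _ _)))
  have hsub1 : W1 ⊆ U := by
    rw [hW1, hU]
    intro z hz
    rw [Finset.mem_Icc] at hz ⊢
    exact ⟨le_trans (min_le_left _ _) hz.1, le_trans hz.2 (le_max_left _ _)⟩
  have hsub2 : W2 ⊆ U := by
    rw [hW2, hU]
    intro z hz
    rw [Finset.mem_Icc] at hz ⊢
    exact ⟨le_trans (min_le_right _ _) hz.1, le_trans hz.2 (le_max_right _ _)⟩
  have hcover : ∀ z ∈ U, z ∈ W1 ∨ z ∈ W2 := by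
    intro z hz
    rw [hU, Finset.mem_Icc] at hz
    rw [hW1, hW2, Finset.mem_Icc, Finset.mem_Icc]
    rcases le_or_gt z b1 with hzb | hzb
    · rcases le_or_gt a1 z with haz | haz
      · exact Or.inl ⟨haz, hzb⟩
      · refine Or.inr ⟨?_, le_trans (le_of_lt haz) (le_trans hvW1.1 hvW2.2)⟩
        rcases min_le_iff.1 hz.1 with h | h
        · exact absurd h (not_le.mpr haz)
        · exact h
    · refine Or.inr ⟨le_trans hvW2.1 (le_trans hvW1.2 (le_of_lt hzb)), ?_⟩
      rcases le_max_iff.1 hz.2 with h | h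
      · exact absurd h (not_le.mpr hzb)
      · exact h
  obtain ⟨f, hfF, hfcov⟩ := hF.1 U hUcut
  rcases hcover _ hfcov.2 with hh1 | hh1
  · have : f = d1 := by
      by_contra hne'
      exact hW1only f hfF hne' ⟨fun ht => hfcov.1 (hsub1 ht), hh1⟩
    subst this
    exact hfcov.1 (hsub2 ht1W2)
  · have : f = d2 := by
      by_contra hne'
      exact hW2only f hfF hne' ⟨fun ht => hfcov.1 (hsub2 ht), hh1⟩
    subst this
    exact hfcov.1 (hsub1 ht2W1)

end F
end WRAPProof
namespace WRAPProof
variable {N : ℕ} [NeZero N]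
section F
variable {F : Finset (DLink N)}

/-- Along a descending walk that starts strictly left of `z` and ends at or
right of `z`, some link crosses `z` rightwards. -/
lemma cross_up {z s t : Fin N} (h : Descend F s t) (hs : s < z) (ht : z ≤ t) :
    ∃ e ∈ F, e.tail < z ∧ z ≤ e.head ∧ Descend F s e.tail ∧ Descend F e.head t := by
  revert hs
  induction h using Relation.ReflTransGen.head_induction_on with
  | refl => intro hs; exact absurd (lt_of_le_of_lt ht hs) (lt_irrefl z)
  | head step hct ih =>
    rename_i s' c
    intro hs
    obtain ⟨e, he, het, heh⟩ := step
    rcases lt_or_ge c z with hc | hc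
    · obtain ⟨e', he', h1, h2, h3, h4⟩ := ih hc
      exact ⟨e', he', h1, h2,
        Relation.ReflTransGen.head ⟨e, he, het, heh⟩ h3, h4⟩
    · exact ⟨e, he, het ▸ hs, heh ▸ hc, het ▸ descend_refl F _, heh ▸ hct⟩

/-- No link of a non-shortenable solution lies on a directed cycle. -/
lemma noCycle (hF : NonShortenable F) : ∀ d ∈ F, ¬ Descend F d.head d.tail := by
  intro d hd hcyc
  classical
  set v₀ := d.head with hv₀
  set SCC : Finset (Fin N) :=
    Finset.univ.filter (fun w => Descend F v₀ w ∧ Descend F w v₀) with hSCC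
  have hmemSCC : ∀ w, w ∈ SCC ↔ (Descend F v₀ w ∧ Descend F w v₀) := by
    intro w; rw [hSCC, Finset.mem_filter]; simp
  have hv₀S : v₀ ∈ SCC := (hmemSCC v₀).2 ⟨descend_refl F _, descend_refl F _⟩
  have htS : d.tail ∈ SCC := (hmemSCC _).2 ⟨hcyc, descend_single hd⟩
  have hne : SCC.Nonempty := ⟨v₀, hv₀S⟩
  set m := SCC.min' hne with hm
  set M := SCC.max' hne with hM
  have hmS : m ∈ SCC := SCC.min'_mem hne
  have hMS : M ∈ SCC := SCC.max'_mem hne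
  -- every SCC vertex has an incoming link from the SCC
  have scc_in_edge : ∀ w ∈ SCC, ∃ e ∈ F, e.head = w ∧ e.tail ∈ SCC := by
    intro w hw
    obtain ⟨hw1, hw2⟩ := (hmemSCC w).1 hw
    rcases Relation.ReflTransGen.cases_tail hw1 with heq | ⟨c, hvc, ⟨e, he, het, heh⟩⟩
    · refine ⟨d, hd, by rw [heq], htS⟩
    · refine ⟨e, he, heh, (hmemSCC _).2 ⟨het ▸ hvc, ?_⟩⟩
      exact descend_trans (het ▸ descend_single he) (heh ▸ hw2)
  -- crossing property
  have crossing : ∀ z : Fin N, m ≤ z → z ≤ M →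
      ∃ e ∈ F, e.tail ∈ SCC ∧ e.head ∈ SCC ∧
        ((e.tail < z ∧ z ≤ e.head) ∨ (e.head ≤ z ∧ z < e.tail)) := by
    intro z hmz hzM
    rcases lt_or_ge m z with hmz' | hmz'
    · have hdes : Descend F m M :=
        descend_trans ((hmemSCC m).1 hmS).2 ((hmemSCC M).1 hMS).1
      obtain ⟨e, he, h1, h2, h3, h4⟩ := cross_up hdes hmz' hzM
      have hetS : e.tail ∈ SCC := (hmemSCC _).2
        ⟨descend_trans ((hmemSCC m).1 hmS).1 h3,
         descend_trans (descend_single he) (descend_trans h4 ((hmemSCC M).1 hMS).2)⟩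
      have hehS : e.head ∈ SCC := (hmemSCC _).2
        ⟨descend_trans ((hmemSCC m).1 hmS).1 (descend_trans h3 (descend_single he)),
         descend_trans h4 ((hmemSCC M).1 hMS).2⟩
      exact ⟨e, he, hetS, hehS, Or.inl ⟨h1, h2⟩⟩
    · have hzm : z = m := le_antisymm hmz' hmz
      obtain ⟨e, he, heh, hetS⟩ := scc_in_edge m hmS
      have hmet : m ≤ e.tail := SCC.min'_le _ hetS
      have hne2 : m ≠ e.tail := by
        intro hEq
        exact e.ne (by rw [← hEq, heh])
      have hlt : m < e.tail := lt_of_le_of_ne hmet hne2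
      refine ⟨e, he, hetS, heh ▸ hmS, Or.inr ⟨?_, ?_⟩⟩
      · rw [heh, hzm]
      · rw [hzm]; exact hlt
  -- witness property
  set Wit : DLink N → Finset (Fin N) → Prop :=
    fun e W => IsCut W ∧ DCovers e W ∧ ∀ f ∈ F, f ≠ e → ¬ DCovers f W with hWit
  set U : Finset (Fin N) :=
    Finset.univ.filter (fun w => ∃ e ∈ F, e.tail ∈ SCC ∧ e.head ∈ SCC ∧
      ∃ W : Finset (Fin N), Wit e W ∧ w ∈ W) with hUdef
  have hmemU : ∀ w, w ∈ U ↔ ∃ e ∈ F, e.tail ∈ SCC ∧ e.head ∈ SCC ∧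
      ∃ W : Finset (Fin N), Wit e W ∧ w ∈ W := by
    intro w; rw [hUdef, Finset.mem_filter]; simp
  have hmid : ∀ z : Fin N, m ≤ z → z ≤ M → z ∈ U := by
    intro z h1 h2
    obtain ⟨e, he, hetS, hehS, hseg⟩ := crossing z h1 h2
    have hwit : ∃ W, IsCut W ∧ DCovers e W ∧ z ∈ W ∧ ∀ f ∈ F, f ≠ e → ¬ DCovers f W := by
      rcases hseg with ⟨hs1, hs2⟩ | ⟨hs1, hs2⟩
      · exact exists_witness hF he (le_trans (min_le_left _ _) (le_of_lt hs1))
          (le_trans hs2 (le_max_right _ _)) (ne_of_lt hs1).symm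
      · exact exists_witness hF he (le_trans (min_le_right _ _) hs1)
          (le_trans (le_of_lt hs2) (le_max_left _ _)) (ne_of_gt hs2).symm
    obtain ⟨W, hWcut, hWcov, hzW, honly⟩ := hwit
    exact (hmemU z).2 ⟨e, he, hetS, hehS, W, ⟨hWcut, hWcov, honly⟩, hzW⟩
  have hWsubU : ∀ e ∈ F, e.tail ∈ SCC → e.head ∈ SCC →
      ∀ W : Finset (Fin N), Wit e W → W ⊆ U := by
    intro e he h1 h2 W hW w hw
    exact (hmemU w).2 ⟨e, he, h1, h2, W, hW, hw⟩
  have hUne : U.Nonempty := ⟨v₀, hmid v₀ (SCC.min'_le _ hv₀S) (SCC.le_max' _ hv₀S)⟩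
  have hUcut : IsCut U := by
    refine ⟨U.min' hUne, U.max' hUne, ?_, U.min'_le _ (U.max'_mem hUne), ?_⟩
    · rw [fin_pos_iff']
      intro h0
      obtain ⟨e, he, h1, h2, W, ⟨hWcut, _, _⟩, hmW⟩ := (hmemU _).1 (U.min'_mem hUne)
      exact cut_zero_not_mem hWcut (h0 ▸ hmW)
    · apply Finset.ext
      intro z
      rw [Finset.mem_Icc]
      constructor
      · intro hz; exact ⟨U.min'_le _ hz, U.le_max' _ hz⟩
      · rintro ⟨hz1, hz2⟩
        rcases lt_or_ge z m with hzm | hzm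
        · obtain ⟨e, he, h1, h2, W, ⟨hWcut, hWcov, honly⟩, hmW⟩ :=
            (hmemU _).1 (U.min'_mem hUne)
          obtain ⟨α, β, hα, hαβ, hWeq⟩ := hWcut
          refine hWsubU e he h1 h2 W ⟨⟨α, β, hα, hαβ, hWeq⟩, hWcov, honly⟩ ?_
          rw [hWeq, Finset.mem_Icc]
          rw [hWeq, Finset.mem_Icc] at hmW
          constructor
          · exact le_trans hmW.1 hz1
          · have hhW : e.head ∈ W := hWcov.2
            rw [hWeq, Finset.mem_Icc] at hhW
            exact le_trans (le_of_lt hzm) (le_trans (SCC.min'_le _ h2) hhW.2)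
        · rcases le_or_gt z M with hzM | hzM
          · exact hmid z hzm hzM
          · obtain ⟨e, he, h1, h2, W, ⟨hWcut, hWcov, honly⟩, hmW⟩ :=
              (hmemU _).1 (U.max'_mem hUne)
            obtain ⟨α, β, hα, hαβ, hWeq⟩ := hWcut
            refine hWsubU e he h1 h2 W ⟨⟨α, β, hα, hαβ, hWeq⟩, hWcov, honly⟩ ?_
            rw [hWeq, Finset.mem_Icc]
            rw [hWeq, Finset.mem_Icc] at hmW
            constructor
            · have hhW : e.head ∈ W := hWcov.2
              rw [hWeq, Finset.mem_Icc] at hhW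
              exact le_trans hhW.1 (le_trans (SCC.le_max' _ h2) (le_of_lt hzM))
            · exact le_trans hz2 hmW.2
  obtain ⟨f, hfF, hfcov⟩ := hF.1 U hUcut
  obtain ⟨e, he, h1, h2, W, hW, hfhW⟩ := (hmemU _).1 hfcov.2
  have hfe : f = e := by
    by_contra hne'
    exact hW.2.2 f hfF hne' ⟨fun ht => hfcov.1 (hWsubU e he h1 h2 W hW ht), hfhW⟩
  subst hfe
  exact hfcov.1 (hmid _ (SCC.min'_le _ h1) (SCC.le_max' _ h1))

lemma descend_antisymm (hF : NonShortenable F) {a b : Fin N}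
    (h1 : Descend F a b) (h2 : Descend F b a) : a = b := by
  by_contra hne
  rcases Relation.ReflTransGen.cases_tail h2 with heq | ⟨c, hbc, ⟨e, he, het, heh⟩⟩
  · exact hne heq
  · exact noCycle hF e he (heh ▸ het ▸ descend_trans h1 hbc)

/-- There is no nonempty "bad" set closed under taking parents. -/
lemma no_bad_chain (hF : NonShortenable F) (S : Fin N → Prop)
    (hstep : ∀ w, S w → ∃ e ∈ F, e.head = w ∧ S e.tail) : ∀ w, ¬ S w := by
  intro w hw
  classical
  have hch : ∀ p : {w : Fin N // S w}, ∃ e : DLink N, e ∈ F ∧ e.head = p.1 ∧ S e.tail := by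
    intro p
    obtain ⟨e, he, h1, h2⟩ := hstep p.1 p.2
    exact ⟨e, he, h1, h2⟩
  choose E hE1 hE2 hE3 using hch
  set g : {w : Fin N // S w} → {w : Fin N // S w} := fun p => ⟨(E p).tail, hE3 p⟩ with hg
  set seq : ℕ → {w : Fin N // S w} := fun k => g^[k] ⟨w, hw⟩ with hseq
  have hsucc : ∀ k, seq (k + 1) = g (seq k) := by
    intro k; rw [hseq]; exact Function.iterate_succ_apply' g k _
  have hdown : ∀ p q : ℕ, p ≤ q → Descend F (seq q).1 (seq p).1 := by
    intro p q hpq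
    induction q, hpq using Nat.le_induction with
    | base => exact descend_refl F _
    | succ k hk ih =>
      refine descend_trans ?_ ih
      have h1 : (seq (k+1)).1 = (E (seq k)).tail := by rw [hsucc k]
      have h2 : (seq k).1 = (E (seq k)).head := (hE2 (seq k)).symm
      rw [h1, h2]
      exact descend_single (hE1 (seq k))
  have hgen : ∀ i j : ℕ, i < j → seq i = seq j → False := by
    intro i j hij heqij
    refine noCycle hF (E (seq i)) (hE1 _) ?_
    have hv : (E (seq i)).head = (seq i).1 := hE2 _
    have ht' : (E (seq i)).tail = (seq (i+1)).1 := by rw [hsucc i]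
    rw [hv, ht', heqij]
    exact hdown (i+1) j hij
  obtain ⟨i, j, hij, hseqeq⟩ := Finite.exists_ne_map_eq_of_infinite seq
  rcases lt_or_gt_of_ne hij with hlt | hlt
  · exact hgen i j hlt hseqeq
  · exact hgen j i hlt hseqeq.symm

/-- Every nonroot vertex has an incoming link. -/
lemma exists_parent (hF : NonShortenable F) {w : Fin N} (hw : w ≠ 0) :
    ∃ e ∈ F, e.head = w := by
  have hcut : IsCut {w} := by
    refine ⟨w, w, fin_pos_iff'.2 hw, le_refl w, ?_⟩
    rw [Finset.Icc_self]
  obtain ⟨e, he, hcov⟩ := hF.1 _ hcut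
  exact ⟨e, he, Finset.mem_singleton.1 hcov.2⟩

/-- The root reaches every vertex. -/
lemma descend_root (hF : NonShortenable F) : ∀ w : Fin N, Descend F 0 w := by
  have := no_bad_chain hF (fun w => ¬ Descend F 0 w) ?_
  · intro w
    by_contra hw
    exact this w hw
  · intro w hw
    have hw0 : w ≠ 0 := by rintro rfl; exact hw (descend_refl F 0)
    obtain ⟨e, he, heh⟩ := exists_parent hF hw0
    refine ⟨e, he, heh, ?_⟩
    intro ht
    exact hw (heh ▸ descend_tail he ht)

/-- KEY: every vertex strictly between the endpoints of a link (head side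
inclusive) is a descendant of the head. -/
lemma key (hF : NonShortenable F) {e : DLink N} (he : e ∈ F) {z : Fin N}
    (h1 : min e.tail e.head ≤ z) (h2 : z ≤ max e.tail e.head) (h3 : z ≠ e.tail) :
    Descend F e.head z := by
  obtain ⟨W, hWcut, hWcov, hzW, honly⟩ := exists_witness hF he h1 h2 h3
  by_contra hz
  refine no_bad_chain hF (fun w => w ∈ W ∧ ¬ Descend F e.head w) ?_ z ⟨hzW, hz⟩
  intro w hw
  obtain ⟨e', he', heh⟩ := exists_parent hF (mem_of_cut hWcut hw.1)
  refine ⟨e', he', heh, ?_, ?_⟩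
  · by_contra ht
    have : e' = e := by
      by_contra hne
      exact honly e' he' hne ⟨ht, heh ▸ hw.1⟩
    exact hw.2 (this ▸ heh ▸ descend_refl F _)
  · intro hdes
    exact hw.2 (heh ▸ descend_tail he' hdes)

/-- Ancestors of a head: either the head itself or an ancestor of the tail. -/
lemma anc_decomp (hF : NonShortenable F) {e : DLink N} (he : e ∈ F) {w : Fin N}
    (h : Descend F w e.head) : w = e.head ∨ Descend F w e.tail := by
  rcases Relation.ReflTransGen.cases_tail h with heq | ⟨c, hwc, ⟨f, hf, hft, hfh⟩⟩
  · exact Or.inl heq.symm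
  · have : f = e := head_injective hF hf he hfh
    exact Or.inr (this ▸ hft ▸ hwc)

end F
end WRAPProof
namespace WRAPProof
variable {N : ℕ} [NeZero N]
section F
variable {F : Finset (DLink N)}

lemma cross_rl {u x : Fin N} (hux : u < x) {s t : Fin N}
    (h : Descend F s t) (hs : x ≤ s) (ht : t ≤ u)
    (hzone : ∀ z, Descend F z t → z ≤ u ∨ x ≤ z) :
    ∃ e ∈ F, x ≤ e.tail ∧ e.head ≤ u ∧ Descend F s e.tail ∧ Descend F e.head t := by
  revert hs
  induction h using Relation.ReflTransGen.head_induction_on with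
  | refl => intro hs; exact absurd (le_trans hs ht) (not_le.mpr hux)
  | head step hct ih =>
    rename_i s' c
    intro hs
    obtain ⟨e, he, het, heh⟩ := step
    rcases hzone c hct with hcu | hcx
    · exact ⟨e, he, het ▸ hs, heh ▸ hcu, het ▸ descend_refl F _, heh ▸ hct⟩
    · obtain ⟨e', he', p1, p2, p3, p4⟩ := ih hcx
      exact ⟨e', he', p1, p2, Relation.ReflTransGen.head ⟨e, he, het, heh⟩ p3, p4⟩

lemma cross_lr {u x : Fin N} (hux : u < x) {s t : Fin N}
    (h : Descend F s t) (hs : s ≤ u) (ht : x ≤ t)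
    (hzone : ∀ z, Descend F z t → z ≤ u ∨ x ≤ z) :
    ∃ e ∈ F, e.tail ≤ u ∧ x ≤ e.head ∧ Descend F s e.tail ∧ Descend F e.head t := by
  revert hs
  induction h using Relation.ReflTransGen.head_induction_on with
  | refl => intro hs; exact absurd (le_trans ht hs) (not_le.mpr hux)
  | head step hct ih =>
    rename_i s' c
    intro hs
    obtain ⟨e, he, het, heh⟩ := step
    rcases hzone c hct with hcu | hcx
    · obtain ⟨e', he', p1, p2, p3, p4⟩ := ih hcu
      exact ⟨e', he', p1, p2, Relation.ReflTransGen.head ⟨e, he, het, heh⟩ p3, p4⟩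
    · exact ⟨e, he, het ▸ hs, heh ▸ hcx, het ▸ descend_refl F _, heh ▸ hct⟩

/-- Two distinct links covering the same cut cannot both have all ancestors of
their tails outside the cut. -/
lemma two_entries_false (hF : NonShortenable F) {C : Finset (Fin N)} {a b : Fin N}
    (ha : 0 < a) (hab : a ≤ b) (hCeq : C = Finset.Icc a b)
    {d1 d2 : DLink N} (h1 : d1 ∈ F) (h2 : d2 ∈ F)
    (hc1 : DCovers d1 C) (hc2 : DCovers d2 C)
    (hu1 : ∀ w, Descend F w d1.tail → w ∉ C)
    (hu2 : ∀ w, Descend F w d2.tail → w ∉ C)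
    (hvlt : d1.head < d2.head) : False := by
  classical
  have hmemC : ∀ z : Fin N, z ∈ C ↔ a ≤ z ∧ z ≤ b := by
    intro z; rw [hCeq, Finset.mem_Icc]
  have hnotC : ∀ z : Fin N, z ∉ C → z < a ∨ b < z := by
    intro z hz
    rcases lt_or_ge z a with h | h
    · exact Or.inl h
    · rcases le_or_gt z b with h' | h'
      · exact absurd ((hmemC z).2 ⟨h, h'⟩) hz
      · exact Or.inr h'
  have hv1 : a ≤ d1.head ∧ d1.head ≤ b := (hmemC _).1 hc1.2
  have hv2 : a ≤ d2.head ∧ d2.head ≤ b := (hmemC _).1 hc2.2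
  -- Step A : d1.tail < a
  have hua : d1.tail < a := by
    rcases hnotC _ hc1.1 with h | h
    · exact h
    · exfalso
      have hk : Descend F d1.head d2.head :=
        key hF h1 (le_trans (min_le_right _ _) (le_of_lt hvlt))
          (le_trans (le_trans hv2.2 (le_of_lt h)) (le_max_left _ _))
          (ne_of_lt (lt_of_le_of_lt hv2.2 h))
      rcases anc_decomp hF h2 hk with heq | hdes
      · exact (ne_of_lt hvlt) heq
      · exact hu2 _ hdes hc1.2
  -- Step B : b < d2.tail
  have hxb : b < d2.tail := by
    rcases hnotC _ hc2.1 with h | h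
    · exfalso
      have hk : Descend F d2.head d1.head :=
        key hF h2 (le_trans (min_le_left _ _) (le_of_lt (lt_of_lt_of_le h hv1.1)))
          (le_trans (le_of_lt hvlt) (le_max_right _ _))
          (Ne.symm (ne_of_lt (lt_of_lt_of_le h hv1.1)))
      rcases anc_decomp hF h1 hk with heq | hdes
      · exact (ne_of_lt hvlt) heq.symm
      · exact hu1 _ hdes hc2.2
    · exact h
  have hux : d1.tail < d2.tail :=
    lt_trans (lt_of_lt_of_le hua hab) hxb
  -- zone lemmas
  have Z1 : ∀ z, Descend F z d1.tail → z ≤ d1.tail ∨ d2.tail ≤ z := by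
    intro z hz
    by_contra hcon
    push_neg at hcon
    obtain ⟨hz1, hz2⟩ := hcon
    by_cases hzC : z ∈ C
    · exact hu1 z hz hzC
    rcases hnotC z hzC with hza | hbz
    · have hk : Descend F d1.head z :=
        key hF h1 (le_trans (min_le_left _ _) (le_of_lt hz1))
          (le_trans (le_of_lt (lt_of_lt_of_le hza hv1.1)) (le_max_right _ _))
          (Ne.symm (ne_of_lt hz1))
      exact noCycle hF d1 h1 (descend_trans hk hz)
    · have hk : Descend F d2.head z :=
        key hF h2 (le_trans (min_le_right _ _) (le_of_lt (lt_of_le_of_lt hv2.2 hbz)))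
          (le_trans (le_of_lt hz2) (le_max_left _ _))
          (ne_of_lt hz2)
      exact hu1 _ (descend_trans hk hz) hc2.2
  have Z2 : ∀ z, Descend F z d2.tail → z ≤ d1.tail ∨ d2.tail ≤ z := by
    intro z hz
    by_contra hcon
    push_neg at hcon
    obtain ⟨hz1, hz2⟩ := hcon
    by_cases hzC : z ∈ C
    · exact hu2 z hz hzC
    rcases hnotC z hzC with hza | hbz
    · have hk : Descend F d1.head z :=
        key hF h1 (le_trans (min_le_left _ _) (le_of_lt hz1))
          (le_trans (le_of_lt (lt_of_lt_of_le hza hv1.1)) (le_max_right _ _))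
          (Ne.symm (ne_of_lt hz1))
      exact hu2 _ (descend_trans hk hz) hc1.2
    · have hk : Descend F d2.head z :=
        key hF h2 (le_trans (min_le_right _ _) (le_of_lt (lt_of_le_of_lt hv2.2 hbz)))
          (le_trans (le_of_lt hz2) (le_max_left _ _))
          (ne_of_lt hz2)
      exact noCycle hF d2 h2 (descend_trans hk hz)
  -- right-to-left crossing links
  have RL : ∀ e ∈ F, e.tail ≤ d1.tail → d2.tail ≤ e.head →
      Descend F e.head d1.tail := by
    intro e he het heh
    have hx1 : d1.head ≤ b := hv1.2
    have hk : Descend F e.head d1.head :=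
      key hF he
        (le_trans (min_le_left _ _) (le_of_lt (lt_of_le_of_lt het (lt_of_lt_of_le hua hv1.1))))
        (le_trans (le_trans hx1 (le_trans (le_of_lt hxb) heh)) (le_max_right _ _))
        (Ne.symm (ne_of_lt (lt_of_le_of_lt het (lt_of_lt_of_le hua hv1.1))))
    rcases anc_decomp hF h1 hk with heq | hdes
    · exfalso
      have : d2.tail ≤ d1.head := heq ▸ heh
      exact absurd (lt_of_le_of_lt hv1.2 hxb) (not_lt.mpr this)
    · exact hdes
  -- left-to-right crossing links
  have LR : ∀ e ∈ F, e.head ≤ d1.tail → d2.tail ≤ e.tail →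
      Descend F e.head d2.tail := by
    intro e he heh het
    have hk : Descend F e.head d2.head :=
      key hF he
        (le_trans (min_le_right _ _)
          (le_of_lt (lt_of_le_of_lt heh (lt_of_lt_of_le hua hv2.1))))
        (le_trans (le_trans hv2.2 (le_trans (le_of_lt hxb) het)) (le_max_left _ _))
        (ne_of_lt (lt_of_le_of_lt hv2.2 (lt_of_lt_of_le hxb het)))
    rcases anc_decomp hF h2 hk with heq | hdes
    · exfalso
      have : d2.head ≤ d1.tail := heq ▸ heh
      exact absurd (lt_of_lt_of_le (lt_of_lt_of_le hua hv2.1) this)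
        (lt_irrefl d1.tail)
    · exact hdes
  -- assembly
  obtain ⟨g0, hg0, hg0t, hg0h, _, _⟩ :=
    cross_lr hux (descend_root hF d2.tail) (Fin.zero_le d1.tail) (le_refl d2.tail) Z2
  have hβu : Descend F g0.head d1.tail := RL g0 hg0 hg0t hg0h
  set SR : Finset (Fin N) :=
    Finset.univ.filter (fun w => d2.tail ≤ w ∧ Descend F w d1.tail) with hSR
  have hmemSR : ∀ z, z ∈ SR ↔ d2.tail ≤ z ∧ Descend F z d1.tail := by
    intro z; rw [hSR, Finset.mem_filter]; simp
  have hSRne : SR.Nonempty := ⟨g0.head, (hmemSR _).2 ⟨hg0h, hβu⟩⟩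
  set msr : Fin N → ℕ := fun z => (SR.filter (fun z' => Descend F z z')).card with hmsr
  obtain ⟨ω, hωSR, hωmin⟩ := Finset.exists_min_image SR msr hSRne
  obtain ⟨hωx, hωu⟩ := (hmemSR ω).1 hωSR
  have hbot : ∀ f ∈ SR, Descend F ω f → f = ω := by
    intro f hfSR hdf
    by_contra hne
    have hsub : SR.filter (fun z' => Descend F f z') ⊂ SR.filter (fun z' => Descend F ω z') := by
      rw [Finset.ssubset_iff_of_subset]
      · refine ⟨ω, Finset.mem_filter.2 ⟨hωSR, descend_refl F ω⟩, ?_⟩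
        intro hin
        exact hne (descend_antisymm hF (Finset.mem_filter.1 hin).2 hdf)
      · intro z hz
        rw [Finset.mem_filter] at hz ⊢
        exact ⟨hz.1, descend_trans hdf hz.2⟩
    exact absurd (hωmin f hfSR) (not_le.mpr (Finset.card_lt_card hsub))
  obtain ⟨g1, hg1F, hg1t, hg1h, hg1ds, hg1dt⟩ :=
    cross_rl hux hωu hωx (le_refl d1.tail) Z1
  have hc'x : Descend F g1.head d2.tail := LR g1 hg1F hg1h hg1t
  obtain ⟨g2, hg2F, hg2t, hg2h, hg2ds, hg2dt⟩ :=
    cross_lr hux hc'x hg1h (le_refl d2.tail) Z2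
  have hfu : Descend F g2.head d1.tail := RL g2 hg2F hg2t hg2h
  have hfSR : g2.head ∈ SR := (hmemSR _).2 ⟨hg2h, hfu⟩
  have hωc' : Descend F ω g1.head := descend_trans hg1ds (descend_single hg1F)
  have hc'f : Descend F g1.head g2.head := descend_trans hg2ds (descend_single hg2F)
  have hωf : Descend F ω g2.head := descend_trans hωc' hc'f
  have hfeq : g2.head = ω := hbot _ hfSR hωf
  have hc'ω : Descend F g1.head ω := hfeq ▸ hc'f
  have heqωc : ω = g1.head := descend_antisymm hF hωc' hc'ω
  have : d2.tail ≤ d1.tail := le_trans (heqωc ▸ hωx) hg1h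
  exact absurd hux (not_lt.mpr this)

end F
end WRAPProof
open WRAPProof in
/-- for a non-shortenable directed WRAP solution `F`, a
directed link `(u, v) ∈ F` is responsible for a 2-cut `C ∈ C_G` iff `v ∈ C`
and every vertex of `C` is `v`-bad (i.e. a descendant of `v`). -/
theorem responsible_iff_all_bad {n : ℕ}
    (L : Finset (Link (n + 3))) (c : Link (n + 3) → ℝ)
    (F : Finset (DLink (n + 3))) (hF : NonShortenable F)
    (d : DLink (n + 3)) (hd : d ∈ F)
    (C : Finset (Fin (n + 3))) (hC : IsCut C) :
    Responsible F d C ↔ (d.head ∈ C ∧ ∀ u ∈ C, Descend F d.head u) := by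
  classical
  constructor
  · rintro ⟨hCcut, hcov, hresp⟩
    refine ⟨hcov.2, ?_⟩
    have hu : ∀ w, Descend F w d.tail → w ∉ C := by
      intro w hw hwC
      refine no_bad_chain hF (fun z => Descend F z d.tail ∧ z ∈ C) ?_ w ⟨hw, hwC⟩
      intro z hz
      obtain ⟨e, he, heh⟩ := exists_parent hF (mem_of_cut hC hz.2)
      have hedt : Descend F e.head d.tail := by rw [heh]; exact hz.1
      have hnc : ¬ DCovers e C := hresp e he hedt
      have htC : e.tail ∈ C := by
        by_contra ht
        exact hnc ⟨ht, heh ▸ hz.2⟩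
      exact ⟨e, he, heh, descend_head he hedt, htC⟩
    intro w hwC
    by_contra hndvw
    set T : Finset (Fin (n + 3)) :=
      Finset.univ.filter (fun z => Descend F z w ∧ z ∈ C) with hT
    have hmemT : ∀ z, z ∈ T ↔ Descend F z w ∧ z ∈ C := by
      intro z; rw [hT, Finset.mem_filter]; simp
    have hwT : w ∈ T := (hmemT w).2 ⟨descend_refl F w, hwC⟩
    set msr : Fin (n + 3) → ℕ :=
      fun z => (Finset.univ.filter (fun z' => z' ∈ C ∧ Descend F z' z)).card with hmsr
    obtain ⟨y, hyT, hymin⟩ := Finset.exists_min_image T msr ⟨w, hwT⟩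
    obtain ⟨hyw, hyC⟩ := (hmemT y).1 hyT
    obtain ⟨e', he', heh'⟩ := exists_parent hF (mem_of_cut hC hyC)
    have hpy : Descend F e'.tail y := by rw [← heh']; exact descend_single he'
    have hpne : e'.tail ≠ y := by rw [← heh']; exact e'.ne
    have hmemM : ∀ z z', z' ∈ Finset.univ.filter (fun z'' => z'' ∈ C ∧ Descend F z'' z) ↔
        (z' ∈ C ∧ Descend F z' z) := by
      intro z z'; rw [Finset.mem_filter]; simp
    have hpnotC : e'.tail ∉ C := by
      intro hpC
      have hpT : e'.tail ∈ T := (hmemT _).2 ⟨descend_trans hpy hyw, hpC⟩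
      have hss : Finset.univ.filter (fun z'' => z'' ∈ C ∧ Descend F z'' e'.tail) ⊂
          Finset.univ.filter (fun z'' => z'' ∈ C ∧ Descend F z'' y) := by
        rw [Finset.ssubset_iff_of_subset]
        · refine ⟨y, (hmemM y y).2 ⟨hyC, descend_refl F y⟩, ?_⟩
          intro hin
          exact hpne (descend_antisymm hF hpy ((hmemM _ _).1 hin).2)
        · intro z' hz'
          obtain ⟨hz1, hz2⟩ := (hmemM _ _).1 hz'
          exact (hmemM _ _).2 ⟨hz1, descend_trans hz2 hpy⟩
      exact absurd (hymin _ hpT) (not_le.mpr (Finset.card_lt_card hss))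
    have hanc : ∀ z, Descend F z e'.tail → z ∉ C := by
      intro z hz hzC
      have hzT : z ∈ T := (hmemT _).2 ⟨descend_trans (descend_trans hz hpy) hyw, hzC⟩
      have hss : Finset.univ.filter (fun z'' => z'' ∈ C ∧ Descend F z'' z) ⊂
          Finset.univ.filter (fun z'' => z'' ∈ C ∧ Descend F z'' y) := by
        rw [Finset.ssubset_iff_of_subset]
        · refine ⟨y, (hmemM y y).2 ⟨hyC, descend_refl F y⟩, ?_⟩
          intro hin
          have hyz : Descend F y z := ((hmemM _ _).1 hin).2
          exact hpne (descend_antisymm hF hpy (descend_trans hyz hz))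
        · intro z' hz'
          obtain ⟨hz1, hz2⟩ := (hmemM _ _).1 hz'
          exact (hmemM _ _).2 ⟨hz1, descend_trans (descend_trans hz2 hz) hpy⟩
      exact absurd (hymin _ hzT) (not_le.mpr (Finset.card_lt_card hss))
    by_cases hyv : y = d.head
    · exact hndvw (descend_trans (hyv ▸ descend_refl F y) hyw)
    have hcove' : DCovers e' C := ⟨hpnotC, heh' ▸ hyC⟩
    obtain ⟨a, b, ha, hab, hCeq⟩ := hC
    rcases lt_trichotomy d.head e'.head with hlt | heq | hlt
    · exact two_entries_false hF ha hab hCeq hd he' hcov hcove' hu hanc hlt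
    · exact hyv (heh' ▸ heq.symm)
    · exact two_entries_false hF ha hab hCeq he' hd hcove' hcov hanc hu hlt
  · rintro ⟨hv, hall⟩
    refine ⟨hC, ⟨?_, hv⟩, ?_⟩
    · intro htC
      exact noCycle hF d hd (hall _ htC)
    · intro d' hd' hdesc hcovd'
      exact noCycle hF d hd (descend_trans (hall _ hcovd'.2) hdesc)
end
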